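/- Fix a 1-admissible datum γ for a connected reductive group G (γ a minuscule dominant coweight generating π₁(G) ≅ ℤ, with V^γ faithful and Z(G) a 1-dimensional connected torus). Let ω̌₀ be the generator of the group of weights orthogonal to all coroots normalized by ⟨θ, ω̌₀⟩ = 1, where θ is the image of γ in π₁(G), and for each simple root index i let ω̌ᵢ be the fundamental weight with ⟨w₀(γ), ω̌ᵢ⟩ = 0. Then the semigroup Λ̌⁺_S := { λ̌ ∈ Λ̌⁺ : ⟨w₀(λ), λ̌⟩ ≥ 0 for all λ ∈ Λ⁺_{G,S} } equals the ℤ₊-span of ω̌₀ and the ω̌ᵢ (i ∈ I), where Λ⁺_{G,S} = { μ ∈ Λ⁺ : μ ≤ kγ for some k ≥ 0 }. Moreover Λ⁺_{G,S} = { λ ∈ Λ⁺ : ⟨w₀(λ), λ̌⟩ ≥ 0 for all λ̌ ∈ Λ̌⁺_S }. -/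

import Mathlib

open scoped BigOperators

namespace AutSheaf

/-- Coweight/weight lattice realized as `ℤⁿ`. -/
abbrev Lat (n : ℕ) := Fin n → ℤ

/-- The canonical perfect pairing between the coweight lattice and the weight lattice. -/
def pair {n : ℕ} (l w : Lat n) : ℤ := ∑ i, l i * w i

lemma pair_sub_smul {n : ℕ} (a b w : Lat n) (k : ℤ) :
    pair (a - k • b) w = pair a w - k * pair b w := by
  simp [pair, sub_mul, Finset.sum_sub_distrib, Finset.mul_sum, mul_assoc]

/-- Combinatorial (root) datum of a connected reductive group: both the coweight
lattice `Λ` and the weight lattice `Λ̌` are realized as `ℤⁿ`, paired by `pair`;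
`roots` is the (finite) set of roots (living on the weight side), `coroot α` is the
coroot of the root `α` (living on the coweight side), and `simple` enumerates the
simple roots of the chosen Borel. -/
structure RootDatum (n m : ℕ) where
  roots : Finset (Lat n)
  coroot : Lat n → Lat n
  simple : Fin m → Lat n
  simple_mem : ∀ i, simple i ∈ roots
  simple_inj : Function.Injective simple
  root_ne_zero : ∀ α ∈ roots, α ≠ (0 : Lat n)
  neg_mem : ∀ α ∈ roots, -α ∈ roots
  coroot_neg : ∀ α ∈ roots, coroot (-α) = -coroot α
  pair_coroot_self : ∀ α ∈ roots, pair (coroot α) α = 2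
  root_comb : ∀ α ∈ roots,
      (∃ c : Fin m → ℕ, α = ∑ i, (c i : ℤ) • simple i) ∨
      (∃ c : Fin m → ℕ, α = -∑ i, (c i : ℤ) • simple i)
  reflect_mem : ∀ α ∈ roots, ∀ β ∈ roots, β - pair (coroot α) β • α ∈ roots

namespace RootDatum

variable {n m : ℕ} (R : RootDatum n m)

/-- The set of positive roots. -/
noncomputable def posRoots : Finset (Lat n) :=
  @Finset.filter _ (fun α => ∃ c : Fin m → ℕ, α = ∑ i, (c i : ℤ) • R.simple i)
    (Classical.decPred _) R.roots

/-- A coweight is dominant if it pairs nonnegatively with every simple root. -/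
def IsDominant (v : Lat n) : Prop := ∀ i, 0 ≤ pair v (R.simple i)

/-- `v` is a `ℤ₊`-combination of positive coroots. -/
def PosCorootComb (v : Lat n) : Prop :=
  ∃ c : Lat n → ℕ, v = ∑ α ∈ R.posRoots, (c α : ℤ) • R.coroot α

/-- The order on coweights: `a ≤ b` iff `b - a` is a `ℤ₊`-combination of positive
coroots. -/
def cole (a b : Lat n) : Prop := R.PosCorootComb (b - a)

/-- A dominant coweight is minuscule if it is a minimal nonzero element of the set of
dominant coweights for the order `cole`. -/
def Minuscule (g : Lat n) : Prop :=
  R.IsDominant g ∧ g ≠ 0 ∧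
    ∀ v : Lat n, R.IsDominant v → v ≠ 0 → R.cole v g → v = g

/-- The coroot lattice. -/
def corootSpan : Submodule ℤ (Lat n) := Submodule.span ℤ (R.coroot '' ↑R.roots)

/-- The root lattice (inside the weight lattice). -/
def rootSpan : Submodule ℤ (Lat n) := Submodule.span ℤ (↑R.roots : Set (Lat n))

/-- `π₁(G) = Λ / (coroot lattice)`. -/
abbrev Pi1 := Lat n ⧸ R.corootSpan

/-- The projection `Λ → π₁(G)`. -/
def toPi1 (v : Lat n) : R.Pi1 := Submodule.Quotient.mk v

/-- The simple reflection on the coweight lattice, as a function. -/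
def sreflFun (i : Fin m) (v : Lat n) : Lat n :=
  v - pair v (R.simple i) • R.coroot (R.simple i)

lemma sreflFun_invol (i : Fin m) (v : Lat n) : R.sreflFun i (R.sreflFun i v) = v := by
  have h2 : pair (R.coroot (R.simple i)) (R.simple i) = 2 :=
    R.pair_coroot_self _ (R.simple_mem i)
  have hp : pair (R.sreflFun i v) (R.simple i) = -pair v (R.simple i) := by
    rw [sreflFun, pair_sub_smul, h2]; ring
  rw [sreflFun, hp]
  unfold sreflFun
  module

/-- The simple reflection on the coweight lattice. -/
def srefl (i : Fin m) : Equiv.Perm (Lat n) :=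
  ⟨R.sreflFun i, R.sreflFun i, R.sreflFun_invol i, R.sreflFun_invol i⟩

/-- The Weyl group, acting on the coweight lattice. -/
def weyl : Subgroup (Equiv.Perm (Lat n)) := Subgroup.closure (Set.range R.srefl)

/-- The Weyl orbit of a coweight. -/
def orbit (g : Lat n) : Set (Lat n) := {v | ∃ w ∈ R.weyl, w g = v}

/-- `V^γ` is a faithful representation of the dual group `Ǧ` iff its set of weights
(which, for minuscule `γ`, is the Weyl orbit of `γ`) generates the full lattice `Λ`. -/
def FaithfulHW (g : Lat n) : Prop := Submodule.span ℤ (R.orbit g) = ⊤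

/-- `{γ}` is a 1-admissible datum: the center `Z(G)` is a 1-dimensional connected
torus (i.e. `Λ̌/(root lattice) ≅ ℤ`), `π₁(G) ≅ ℤ`, `γ` is a minuscule dominant coweight
whose image generates `π₁(G)`, and `V^γ` is faithful. -/
def IsOneAdmissible (g : Lat n) : Prop :=
  Nonempty ((Lat n ⧸ R.rootSpan) ≃ₗ[ℤ] ℤ) ∧
  Nonempty (R.Pi1 ≃ₗ[ℤ] ℤ) ∧
  R.Minuscule g ∧
  (∀ x : R.Pi1, ∃ k : ℤ, x = k • R.toPi1 g) ∧
  R.FaithfulHW g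

/-- `Λ⁺_{G,S} = { μ ∈ Λ⁺ : μ ≤ kγ for some k ≥ 0 }`. -/
def LamGS (g : Lat n) : Set (Lat n) :=
  {v | R.IsDominant v ∧ ∃ k : ℕ, R.cole v (k • g)}

/-- A weight is dominant if it pairs nonnegatively with every simple coroot. -/
def IsDominantWeight (lc : Lat n) : Prop := ∀ i, 0 ≤ pair (R.coroot (R.simple i)) lc

/-- `Λ̌⁺_S = { λ̌ ∈ Λ̌⁺ : ⟨w₀(λ), λ̌⟩ ≥ 0 for all λ ∈ Λ⁺_{G,S} }`. -/
def LamCheckS (g : Lat n) (w0 : Equiv.Perm (Lat n)) : Set (Lat n) :=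
  {lc | R.IsDominantWeight lc ∧ ∀ v ∈ R.LamGS g, 0 ≤ pair (w0 v) lc}

section Levi

variable (IM : Set (Fin m))

/-- A coweight is `M`-dominant for the standard Levi `M` attached to `IM ⊂ I` if it
pairs nonnegatively with the simple roots from `IM`. -/
def IsMDominant (v : Lat n) : Prop := ∀ i ∈ IM, 0 ≤ pair v (R.simple i)

/-- The positive roots of the standard Levi `M`. -/
noncomputable def posRootsM : Finset (Lat n) :=
  @Finset.filter _ (fun α => α ∈ Submodule.span ℤ (R.simple '' IM))
    (Classical.decPred _) R.posRoots

/-- `v` is a `ℤ₊`-combination of positive coroots of `M`. -/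
def PosCorootCombM (v : Lat n) : Prop :=
  ∃ c : Lat n → ℕ, v = ∑ α ∈ R.posRootsM IM, (c α : ℤ) • R.coroot α

/-- The order on coweights generated by the positive coroots of `M`. -/
def coleM (a b : Lat n) : Prop := R.PosCorootCombM IM (b - a)

/-- Minuscule dominant coweight for the Levi `M`. -/
def MinusculeM (g : Lat n) : Prop :=
  R.IsMDominant IM g ∧ g ≠ 0 ∧
    ∀ v : Lat n, R.IsMDominant IM v → v ≠ 0 → R.coleM IM v g → v = g

/-- `Λ⁺_{M,S} = { λ ∈ Λ⁺_M : wλ ∈ Λ⁺_{G,S} for some w ∈ W }`. -/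
def LamMS (g : Lat n) : Set (Lat n) :=
  {v | R.IsMDominant IM v ∧ ∃ w ∈ R.weyl, w v ∈ R.LamGS g}

/-- `π₁(M) = Λ_{G,P}`: the quotient of `Λ` by the span of the simple coroots from `IM`. -/
abbrev Pi1M := Lat n ⧸ Submodule.span ℤ ((fun i => R.coroot (R.simple i)) '' IM)

/-- The projection `Λ → π₁(M)`. -/
def toPi1M (v : Lat n) : R.Pi1M IM := Submodule.Quotient.mk v

/-- `Λ^{+,θ}_{M,S}`: elements of `Λ⁺_{M,S}` whose image in `π₁(G)` is `θ`
(the image of `γ`). -/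
def LamThetaMS (g : Lat n) : Set (Lat n) :=
  {v | v ∈ R.LamMS IM g ∧ R.toPi1 v = R.toPi1 g}

end Levi

end RootDatum

end AutSheaf

namespace AutSheaf
/-! ### ℚ-side foundations -/

abbrev QS (n : ℕ) := Fin n → ℚ

def cz {n : ℕ} (v : Lat n) : QS n := fun i => (v i : ℚ)

def dotQ {n : ℕ} (x y : QS n) : ℚ := ∑ i, x i * y i

namespace Foundations

variable {n : ℕ}

lemma cz_inj : Function.Injective (cz (n := n)) := by
  intro a b h
  funext i
  have : ((a i : ℚ)) = (b i : ℚ) := congrFun h i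
  exact_mod_cast this

lemma cz_add (a b : Lat n) : cz (a + b) = cz a + cz b := by
  funext i; simp [cz]

lemma cz_sub (a b : Lat n) : cz (a - b) = cz a - cz b := by
  funext i; simp [cz]

lemma cz_neg (a : Lat n) : cz (-a) = -cz a := by
  funext i; simp [cz]

lemma cz_zero : cz (0 : Lat n) = 0 := by funext i; simp [cz]

lemma cz_zsmul (k : ℤ) (a : Lat n) : cz (k • a) = (k : ℚ) • cz a := by
  funext i; simp [cz]

lemma cz_nsmul (k : ℕ) (a : Lat n) : cz (k • a) = (k : ℚ) • cz a := by
  funext i; simp [cz]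

lemma cz_sum {ι : Type*} (s : Finset ι) (f : ι → Lat n) :
    cz (∑ i ∈ s, f i) = ∑ i ∈ s, cz (f i) := by
  funext j; simp [cz]

lemma dotQ_cast (a b : Lat n) : dotQ (cz a) (cz b) = (pair a b : ℚ) := by
  simp [dotQ, cz, pair]

lemma dotQ_comm (x y : QS n) : dotQ x y = dotQ y x := by
  simp [dotQ, mul_comm]

lemma dotQ_add_left (x y z : QS n) : dotQ (x + y) z = dotQ x z + dotQ y z := by
  simp [dotQ, add_mul, Finset.sum_add_distrib]

lemma dotQ_add_right (x y z : QS n) : dotQ x (y + z) = dotQ x y + dotQ x z := by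
  simp [dotQ, mul_add, Finset.sum_add_distrib]

lemma dotQ_sub_left (x y z : QS n) : dotQ (x - y) z = dotQ x z - dotQ y z := by
  simp [dotQ, sub_mul, Finset.sum_sub_distrib]

lemma dotQ_sub_right (x y z : QS n) : dotQ x (y - z) = dotQ x y - dotQ x z := by
  simp [dotQ, mul_sub, Finset.sum_sub_distrib]

lemma dotQ_smul_left (q : ℚ) (x y : QS n) : dotQ (q • x) y = q * dotQ x y := by
  simp [dotQ, Finset.mul_sum, mul_assoc]

lemma dotQ_smul_right (q : ℚ) (x y : QS n) : dotQ x (q • y) = q * dotQ x y := by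
  simp [dotQ, Finset.mul_sum]; rw [Finset.sum_congr rfl]; intros; ring

lemma dotQ_neg_left (x y : QS n) : dotQ (-x) y = -dotQ x y := by
  simp [dotQ, Finset.sum_neg_distrib]

lemma dotQ_neg_right (x y : QS n) : dotQ x (-y) = -dotQ x y := by
  simp [dotQ, Finset.sum_neg_distrib]

lemma dotQ_zero_left (y : QS n) : dotQ 0 y = 0 := by simp [dotQ]

lemma dotQ_zero_right (x : QS n) : dotQ x 0 = 0 := by simp [dotQ]

lemma dotQ_sum_left {ι : Type*} (s : Finset ι) (f : ι → QS n) (y : QS n) :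
    dotQ (∑ i ∈ s, f i) y = ∑ i ∈ s, dotQ (f i) y := by
  simp [dotQ]; rw [Finset.sum_comm]; apply Finset.sum_congr rfl; intros
  simp [Finset.sum_mul]

lemma dotQ_sum_right {ι : Type*} (s : Finset ι) (x : QS n) (f : ι → QS n) :
    dotQ x (∑ i ∈ s, f i) = ∑ i ∈ s, dotQ x (f i) := by
  simp [dotQ]; rw [Finset.sum_comm]; apply Finset.sum_congr rfl; intros
  simp [Finset.mul_sum]

lemma dotQ_single (k : Fin n) (y : QS n) : dotQ (Pi.single k 1) y = y k := by
  simp [dotQ, Pi.single_apply]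

lemma dotQ_single_right (x : QS n) (k : Fin n) : dotQ x (Pi.single k 1) = x k := by
  simp [dotQ, Pi.single_apply]

lemma cz_single (k : Fin n) : cz (Pi.single k (1 : ℤ)) = Pi.single k (1 : ℚ) := by
  funext i
  simp only [cz, Pi.single_apply]
  split <;> simp

lemma dotQ_self_nonneg (x : QS n) : 0 ≤ dotQ x x :=
  Finset.sum_nonneg fun i _ => mul_self_nonneg _

lemma dotQ_self_eq_zero {x : QS n} (h : dotQ x x = 0) : x = 0 := by
  funext i
  have := (Finset.sum_eq_zero_iff_of_nonneg (fun i _ => mul_self_nonneg (x i))).1 h i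
    (Finset.mem_univ i)
  have := mul_self_eq_zero.1 this
  simpa using this

/-- linear functional given by dot with a fixed vector on the left -/
def dotL (x : QS n) : QS n →ₗ[ℚ] ℚ where
  toFun y := dotQ x y
  map_add' a b := dotQ_add_right x a b
  map_smul' q a := by simp [dotQ_smul_right]

lemma dotL_apply (x y : QS n) : dotL x y = dotQ x y := rfl

/-- clear denominators -/
lemma rat_clear (u : QS n) : ∃ (N : ℕ) (v : Lat n), 0 < N ∧ cz v = (N : ℚ) • u := by
  classical
  refine ⟨∏ k, (u k).den, fun k => (u k).num * (∏ j, (u j).den) / (u k).den, ?_, ?_⟩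
  · exact Finset.prod_pos fun k _ => (u k).pos
  · funext k
    obtain ⟨t, ht⟩ : ((u k).den : ℤ) ∣ (∏ j, (u j).den : ℕ) := by
      exact_mod_cast Int.natCast_dvd_natCast.2 (Finset.dvd_prod_of_mem _ (Finset.mem_univ k))
    have hden : ((u k).den : ℚ) ≠ 0 := by exact_mod_cast (u k).den_nz
    have : (u k).num * (∏ j, (u j).den) / ((u k).den : ℤ) = (u k).num * t := by
      rw [ht, mul_comm ((u k).den : ℤ) t, ← mul_assoc, Int.mul_ediv_cancel _ (by exact_mod_cast (u k).den_nz)]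
    have hnum : (u k : ℚ) = (u k).num / (u k).den := by exact_mod_cast (Rat.num_div_den (u k)).symm
    have htq : ((∏ j, (u j).den : ℕ) : ℚ) = ((u k).den : ℚ) * (t : ℚ) := by exact_mod_cast congrArg (fun z : ℤ => (z : ℚ)) ht
    rw [cz, this]
    push_cast
    have hh : ((u k).den : ℚ) * u k = (u k).num := by
      rw [mul_comm]; exact Rat.mul_den_eq_num _
    rw [Pi.smul_apply, smul_eq_mul, ← Nat.cast_prod, htq, mul_comm ((u k).den : ℚ) (t : ℚ),
      mul_assoc, hh]
    push_cast
    ring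

end Foundations

end AutSheaf
namespace AutSheaf

open Foundations

set_option maxHeartbeats 1000000

/-- Bundled context for the main theorem. -/
structure ACtx (n m : ℕ) where
  R : RootDatum n m
  γ : Lat n
  hγ : R.IsOneAdmissible γ
  w0 : Equiv.Perm (Lat n)
  hw0 : w0 ∈ R.weyl
  hw0d : ∀ v : Lat n, R.IsDominant v → R.IsDominant (-(w0 v))
  ω0 : Lat n
  hω0orth : ∀ α ∈ R.roots, pair (R.coroot α) ω0 = 0
  hω0norm : pair γ ω0 = 1
  ω : Fin m → Lat n
  hω : ∀ i j, pair (R.coroot (R.simple j)) (ω i) = if i = j then 1 else 0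
  hωw0 : ∀ i, pair (w0 γ) (ω i) = 0

namespace ACtx

variable {n m : ℕ} (C : ACtx n m)

noncomputable def RQ : Finset (QS n) := C.R.roots.image cz

noncomputable def Rspan : Submodule ℚ (QS n) := Submodule.span ℚ (C.RQ : Set (QS n))

lemma mem_RQ {β : Lat n} (hβ : β ∈ C.R.roots) : cz β ∈ C.RQ :=
  Finset.mem_image_of_mem _ hβ

lemma RQ_sub : (C.RQ : Set (QS n)) ⊆ C.Rspan := Submodule.subset_span

lemma exists_of_mem_RQ {ρ : QS n} (hρ : ρ ∈ C.RQ) : ∃ β ∈ C.R.roots, cz β = ρ := by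
  obtain ⟨β, hβ, rfl⟩ := Finset.mem_image.1 hρ
  exact ⟨β, hβ, rfl⟩

/-- Reflection (on the weight side) associated to a root, as a linear map on `ℚⁿ`. -/
noncomputable def σQ (β : Lat n) : QS n →ₗ[ℚ] QS n :=
  LinearMap.id - (dotL (cz (C.R.coroot β))).smulRight (cz β)

lemma σQ_apply (β : Lat n) (x : QS n) :
    C.σQ β x = x - dotQ (cz (C.R.coroot β)) x • cz β := rfl

lemma σQ_cz (β ρ : Lat n) :
    C.σQ β (cz ρ) = cz (ρ - pair (C.R.coroot β) ρ • β) := by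
  rw [σQ_apply, cz_sub, cz_zsmul, dotQ_cast]

lemma σQ_mem_RQ {β : Lat n} (hβ : β ∈ C.R.roots) {ρ : QS n} (hρ : ρ ∈ C.RQ) :
    C.σQ β ρ ∈ C.RQ := by
  obtain ⟨ρ', hρ', rfl⟩ := C.exists_of_mem_RQ hρ
  rw [σQ_cz]
  exact C.mem_RQ (C.R.reflect_mem β hβ ρ' hρ')

lemma σQ_maps {β : Lat n} (hβ : β ∈ C.R.roots) : ∀ x ∈ C.Rspan, C.σQ β x ∈ C.Rspan := by
  intro x hx
  have h : Submodule.map (C.σQ β) C.Rspan ≤ C.Rspan := by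
    rw [Rspan, Submodule.map_span, Submodule.span_le]
    rintro _ ⟨y, hy, rfl⟩
    exact C.RQ_sub (C.σQ_mem_RQ hβ hy)
  exact h ⟨x, hx, rfl⟩

noncomputable def σR {β : Lat n} (hβ : β ∈ C.R.roots) : Module.End ℚ C.Rspan :=
  (C.σQ β).restrict (C.σQ_maps hβ)

lemma σR_coe {β : Lat n} (hβ : β ∈ C.R.roots) (x : C.Rspan) :
    ((C.σR hβ x : C.Rspan) : QS n) = C.σQ β (x : QS n) :=
  LinearMap.restrict_coe_apply _ _ _

lemma σQ_invol {β : Lat n} (hβ : β ∈ C.R.roots) (x : QS n) :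
    C.σQ β (C.σQ β x) = x := by
  have h2 : dotQ (cz (C.R.coroot β)) (cz β) = 2 := by
    rw [dotQ_cast, C.R.pair_coroot_self β hβ]; norm_num
  rw [σQ_apply, σQ_apply, dotQ_sub_right, dotQ_smul_right, h2]
  module

lemma σR_invol {β : Lat n} (hβ : β ∈ C.R.roots) : C.σR hβ * C.σR hβ = 1 := by
  apply LinearMap.ext
  intro x
  apply Subtype.ext
  rw [Module.End.mul_apply, σR_coe, σR_coe]
  simpa using C.σQ_invol hβ (x : QS n)

def Kset : Set (Module.End ℚ C.Rspan) := {f | ∃ β, ∃ hβ : β ∈ C.R.roots, f = C.σR hβ}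

noncomputable def K : Submonoid (Module.End ℚ C.Rspan) := Submonoid.closure C.Kset

lemma σR_mem_K {β : Lat n} (hβ : β ∈ C.R.roots) : C.σR hβ ∈ C.K :=
  Submonoid.subset_closure ⟨β, hβ, rfl⟩

lemma span_top : Submodule.span ℚ {x : C.Rspan | (x : QS n) ∈ C.RQ} = ⊤ := by
  apply Submodule.map_injective_of_injective C.Rspan.injective_subtype
  rw [Submodule.map_span, Submodule.map_top, Submodule.range_subtype]
  have himg : C.Rspan.subtype '' {x : C.Rspan | (x : QS n) ∈ C.RQ} = (C.RQ : Set (QS n)) := by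
    ext y
    constructor
    · rintro ⟨x, hx, rfl⟩; exact hx
    · intro hy; exact ⟨⟨y, C.RQ_sub hy⟩, hy, rfl⟩
  rw [himg]
  rfl

lemma K_mem_RQ {f : Module.End ℚ C.Rspan} (hf : f ∈ C.K) :
    ∀ x : C.Rspan, (x : QS n) ∈ C.RQ → ((f x : C.Rspan) : QS n) ∈ C.RQ := by
  induction hf using Submonoid.closure_induction with
  | mem g hg =>
      obtain ⟨β, hβ, rfl⟩ := hg
      intro x hx
      rw [σR_coe]
      exact C.σQ_mem_RQ hβ hx
  | one => intro x hx; exact hx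
  | mul g h _ _ hg hh =>
      intro x hx
      rw [Module.End.mul_apply]
      exact hg _ (hh _ hx)

lemma K_finite : (C.K : Set (Module.End ℚ C.Rspan)).Finite := by
  rw [← Set.finite_coe_iff]
  haveI hRQfin : Finite {y : QS n // y ∈ C.RQ} := by
    exact FinsetCoe.fintype C.RQ |>.finite
  haveI hRR : Finite {x : C.Rspan // (x : QS n) ∈ C.RQ} := by
    apply Finite.of_injective
      (fun x : {x : C.Rspan // (x : QS n) ∈ C.RQ} => (⟨(x.1 : QS n), x.2⟩ : {y : QS n // y ∈ C.RQ}))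
    intro a b hab
    simp only [Subtype.mk.injEq] at hab
    exact Subtype.ext (Subtype.ext hab)
  apply Finite.of_injective
    (fun f : C.K => fun x : {x : C.Rspan // (x : QS n) ∈ C.RQ} =>
      (⟨f.1 x.1, C.K_mem_RQ f.2 x.1 x.2⟩ : {x : C.Rspan // (x : QS n) ∈ C.RQ}))
  intro f g hfg
  apply Subtype.ext
  apply LinearMap.ext_on C.span_top
  intro x hx
  have := congrFun hfg ⟨x, hx⟩
  exact congrArg Subtype.val this

noncomputable def KF : Finset (Module.End ℚ C.Rspan) := C.K_finite.toFinset

lemma mem_KF {f : Module.End ℚ C.Rspan} : f ∈ C.KF ↔ f ∈ C.K := Set.Finite.mem_toFinset _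

/-- The Weyl-invariant positive definite form on the root span. -/
noncomputable def B (x y : C.Rspan) : ℚ := ∑ f ∈ C.KF, dotQ ((f x : C.Rspan) : QS n) ((f y : C.Rspan) : QS n)

lemma B_comm (x y : C.Rspan) : C.B x y = C.B y x := by
  unfold B; apply Finset.sum_congr rfl; intros; exact dotQ_comm _ _

lemma B_add_left (x y z : C.Rspan) : C.B (x + y) z = C.B x z + C.B y z := by
  unfold B
  rw [← Finset.sum_add_distrib]
  apply Finset.sum_congr rfl; intro f _
  rw [map_add]
  push_cast [Submodule.coe_add]
  rw [dotQ_add_left]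

lemma B_smul_left (q : ℚ) (x y : C.Rspan) : C.B (q • x) y = q * C.B x y := by
  unfold B
  rw [Finset.mul_sum]
  apply Finset.sum_congr rfl; intro f _
  rw [map_smul]
  push_cast [Submodule.coe_smul]
  rw [dotQ_smul_left]

lemma B_neg_left (x y : C.Rspan) : C.B (-x) y = -C.B x y := by
  have h : (-x : C.Rspan) = (-1 : ℚ) • x := by module
  rw [h, B_smul_left]; ring

lemma B_add_right (x y z : C.Rspan) : C.B x (y + z) = C.B x y + C.B x z := by
  rw [B_comm, B_add_left, B_comm C y x, B_comm C z x]

lemma B_smul_right (q : ℚ) (x y : C.Rspan) : C.B x (q • y) = q * C.B x y := by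
  rw [B_comm, B_smul_left, B_comm C y x]

lemma B_neg_right (x y : C.Rspan) : C.B x (-y) = -C.B x y := by
  rw [B_comm, B_neg_left, B_comm C y x]

lemma B_sum_left {ι : Type*} (s : Finset ι) (f : ι → C.Rspan) (y : C.Rspan) :
    C.B (∑ i ∈ s, f i) y = ∑ i ∈ s, C.B (f i) y := by
  classical
  induction s using Finset.induction with
  | empty =>
      simp only [Finset.sum_empty]
      have : C.B 0 y = C.B ((0:ℚ) • 0) y := by norm_num
      rw [this, B_smul_left]; ring
  | insert _ _ hne ih =>
      rw [Finset.sum_insert hne, Finset.sum_insert hne, B_add_left, ih]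

lemma B_zero_left (y : C.Rspan) : C.B 0 y = 0 := by
  have : C.B 0 y = C.B ((0:ℚ) • 0) y := by norm_num
  rw [this, B_smul_left]; ring

lemma B_self_nonneg (x : C.Rspan) : 0 ≤ C.B x x :=
  Finset.sum_nonneg fun f _ => dotQ_self_nonneg _

lemma one_mem_KF : 1 ∈ C.KF := C.mem_KF.2 (one_mem _)

lemma B_self_pos {x : C.Rspan} (hx : x ≠ 0) : 0 < C.B x x := by
  have h1 : dotQ ((x : C.Rspan) : QS n) ((x : C.Rspan) : QS n) ≤ C.B x x := by
    have h := Finset.single_le_sum (f := fun f : Module.End ℚ C.Rspan =>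
      dotQ ((f x : C.Rspan) : QS n) ((f x : C.Rspan) : QS n))
      (fun f _ => dotQ_self_nonneg _) C.one_mem_KF
    simp only [Module.End.one_apply] at h
    exact h
  have h2 : 0 < dotQ (x : QS n) (x : QS n) := by
    rcases lt_or_eq_of_le (dotQ_self_nonneg ((x : C.Rspan) : QS n)) with h | h
    · exact h
    · exfalso
      apply hx
      apply Subtype.ext
      simpa using dotQ_self_eq_zero h.symm
  linarith

lemma B_eq_zero_self {x : C.Rspan} (h : C.B x x = 0) : x = 0 := by
  by_contra hx
  exact absurd h (ne_of_gt (C.B_self_pos hx))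

/-- invariance of B under invertible elements of K -/
lemma B_inv {g h : Module.End ℚ C.Rspan} (hg : g ∈ C.K) (hh : h ∈ C.K)
    (hgh : g * h = 1) (hhg : h * g = 1) (x y : C.Rspan) :
    C.B (g x) (g y) = C.B x y := by
  unfold B
  apply Finset.sum_nbij' (i := fun f => f * g) (j := fun f => f * h)
  · intro f hf; exact C.mem_KF.2 (mul_mem (C.mem_KF.1 hf) hg)
  · intro f hf; exact C.mem_KF.2 (mul_mem (C.mem_KF.1 hf) hh)
  · intro f _; rw [mul_assoc, hgh, mul_one]
  · intro f _; rw [mul_assoc, hhg, mul_one]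
  · intro f _; rw [Module.End.mul_apply, Module.End.mul_apply]

lemma B_sigma_inv {β : Lat n} (hβ : β ∈ C.R.roots) (x y : C.Rspan) :
    C.B (C.σR hβ x) (C.σR hβ y) = C.B x y :=
  C.B_inv (C.σR_mem_K hβ) (C.σR_mem_K hβ) (C.σR_invol hβ) (C.σR_invol hβ) x y

/-- the root β as an element of Rspan -/
noncomputable def rt {β : Lat n} (hβ : β ∈ C.R.roots) : C.Rspan :=
  ⟨cz β, C.RQ_sub (C.mem_RQ hβ)⟩

lemma rt_coe {β : Lat n} (hβ : β ∈ C.R.roots) : ((C.rt hβ : C.Rspan) : QS n) = cz β := rfl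

lemma rt_ne_zero {β : Lat n} (hβ : β ∈ C.R.roots) : C.rt hβ ≠ 0 := by
  intro h
  apply C.R.root_ne_zero β hβ
  apply cz_inj
  rw [cz_zero]
  exact congrArg Subtype.val h

lemma B_rt_pos {β : Lat n} (hβ : β ∈ C.R.roots) : 0 < C.B (C.rt hβ) (C.rt hβ) :=
  C.B_self_pos (C.rt_ne_zero hβ)

lemma B_sub_left' (x y z : C.Rspan) : C.B (x - y) z = C.B x z - C.B y z := by
  have : x - y = x + (-1 : ℚ) • y := by module
  rw [this, B_add_left, B_smul_left]; ring

/-- The key reflection formula: the coroot pairing is computed by `B`. -/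
lemma refl_formula {β : Lat n} (hβ : β ∈ C.R.roots) (x : C.Rspan) :
    dotQ (cz (C.R.coroot β)) (x : QS n) * C.B (C.rt hβ) (C.rt hβ) = 2 * C.B (C.rt hβ) x := by
  have key := C.B_sigma_inv hβ x (C.rt hβ)
  have hσrt : C.σR hβ (C.rt hβ) = -C.rt hβ := by
    apply Subtype.ext
    rw [σR_coe, σQ_apply, rt_coe]
    have h2 : dotQ (cz (C.R.coroot β)) (cz β) = 2 := by
      rw [dotQ_cast, C.R.pair_coroot_self β hβ]; norm_num
    rw [h2]
    push_cast [Submodule.coe_neg]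
    rw [rt_coe]
    funext i; simp; ring
  have hσx : C.σR hβ x = x - dotQ (cz (C.R.coroot β)) (x : QS n) • C.rt hβ := by
    apply Subtype.ext
    rw [σR_coe, σQ_apply]
    push_cast [Submodule.coe_sub, Submodule.coe_smul]
    rw [rt_coe]
  rw [hσrt, hσx, B_neg_right, B_sub_left', B_smul_left] at key
  rw [B_comm C (C.rt hβ) x]
  linarith [key]

end ACtx

end AutSheaf
namespace AutSheaf

open Foundations

namespace ACtx

variable {n m : ℕ} (C : ACtx n m)

/-! ### short names -/

noncomputable def γQ : QS n := cz C.γ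
noncomputable def ω0Q : QS n := cz C.ω0
noncomputable def ωQ (i : Fin m) : QS n := cz (C.ω i)
noncomputable def cβ (i : Fin m) : QS n := cz (C.R.coroot (C.R.simple i))
noncomputable def aR (i : Fin m) : C.Rspan := C.rt (C.R.simple_mem i)

lemma aR_coe (i : Fin m) : ((C.aR i : C.Rspan) : QS n) = cz (C.R.simple i) := rfl

lemma dot_γ_ω0 : dotQ C.γQ C.ω0Q = 1 := by
  rw [γQ, ω0Q, dotQ_cast, C.hω0norm]; norm_num

lemma dot_cβ_ω0 (j : Fin m) : dotQ (C.cβ j) C.ω0Q = 0 := by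
  rw [cβ, ω0Q, dotQ_cast, C.hω0orth _ (C.R.simple_mem j)]; norm_num

lemma dot_cβ_ω (j i : Fin m) : dotQ (C.cβ j) (C.ωQ i) = if i = j then 1 else 0 := by
  rw [cβ, ωQ, dotQ_cast, C.hω i j]
  split <;> norm_num

/-! ### integer span to rational span -/

lemma cz_mem_spanQ {s : Set (Lat n)} {x : Lat n} (hx : x ∈ Submodule.span ℤ s) :
    cz x ∈ Submodule.span ℚ (cz '' s) := by
  induction hx using Submodule.span_induction with
  | mem y hy => exact Submodule.subset_span ⟨y, hy, rfl⟩
  | zero => rw [cz_zero]; exact Submodule.zero_mem _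
  | add a b _ _ ha hb => rw [cz_add]; exact Submodule.add_mem _ ha hb
  | smul k a _ ha => rw [cz_zsmul]; exact Submodule.smul_mem _ _ ha

/-! ### dichotomy for roots -/

lemma root_dichotomy {β : Lat n} (hβ : β ∈ C.R.roots) :
    ∃ z : Fin m → ℤ, β = ∑ i, z i • C.R.simple i ∧
      ((∀ i, 0 ≤ z i) ∨ (∀ i, z i ≤ 0)) := by
  rcases C.R.root_comb β hβ with ⟨c, hc⟩ | ⟨c, hc⟩
  · exact ⟨fun i => (c i : ℤ), hc, Or.inl fun i => Int.natCast_nonneg _⟩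
  · refine ⟨fun i => -(c i : ℤ), ?_, Or.inr fun i => neg_nonpos.2 (Int.natCast_nonneg _)⟩
    rw [hc, ← Finset.sum_neg_distrib]
    apply Finset.sum_congr rfl
    intros; rw [neg_smul]

lemma mem_posRoots_iff {α : Lat n} :
    α ∈ C.R.posRoots ↔ α ∈ C.R.roots ∧ ∃ c : Fin m → ℕ, α = ∑ i, (c i : ℤ) • C.R.simple i := by
  unfold RootDatum.posRoots
  exact @Finset.mem_filter _ (fun a => ∃ c : Fin m → ℕ, a = ∑ i, (c i : ℤ) • C.R.simple i)
    (Classical.decPred _) C.R.roots α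

lemma simple_mem_posRoots (j : Fin m) : C.R.simple j ∈ C.R.posRoots := by
  rw [mem_posRoots_iff]
  refine ⟨C.R.simple_mem j, fun i => if i = j then 1 else 0, ?_⟩
  rw [Finset.sum_congr rfl (fun i _ => ?_), Finset.sum_ite_eq' Finset.univ j
    (fun i => (1:ℤ) • C.R.simple i)]
  · simp
  · split <;> simp_all

/-! ### rank facts -/

lemma finrank_QS : Module.finrank ℚ (QS n) = n := by
  rw [Module.finrank_pi]; simp

lemma cw_indep : LinearIndependent ℚ (Fin.cons C.γQ C.cβ : Fin (m+1) → QS n) := by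
  rw [Fintype.linearIndependent_iff]
  intro g hg
  have h0 : g 0 = 0 := by
    have := congrArg (fun y => dotQ y C.ω0Q) hg
    simp only [dotQ_zero_left] at this
    rw [dotQ_sum_left] at this
    rw [Fin.sum_univ_succ] at this
    simp only [Fin.cons_zero, Fin.cons_succ, dotQ_smul_left] at this
    rw [C.dot_γ_ω0] at this
    have hrest : ∀ i : Fin m, g i.succ * dotQ (C.cβ i) C.ω0Q = 0 := by
      intro i; rw [C.dot_cβ_ω0]; ring
    rw [Finset.sum_congr rfl (fun i _ => hrest i)] at this
    simpa using this
  intro i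
  induction i using Fin.cases with
  | zero => exact h0
  | succ j =>
    have := congrArg (fun y => dotQ y (C.ωQ j)) hg
    simp only [dotQ_zero_left] at this
    rw [dotQ_sum_left, Fin.sum_univ_succ] at this
    simp only [Fin.cons_zero, Fin.cons_succ, dotQ_smul_left] at this
    have hsum : ∀ i : Fin m, g i.succ * dotQ (C.cβ i) (C.ωQ j) =
        if j = i then g i.succ else 0 := by
      intro i; rw [C.dot_cβ_ω]
      split <;> ring
    rw [Finset.sum_congr rfl (fun i _ => hsum i), Finset.sum_ite_eq Finset.univ j
      (fun i => g i.succ)] at this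
    simp only [Finset.mem_univ, if_true] at this
    rw [h0] at this
    simpa using this

lemma w_indep : LinearIndependent ℚ (Fin.cons C.ω0Q C.ωQ : Fin (m+1) → QS n) := by
  rw [Fintype.linearIndependent_iff]
  intro g hg
  have hsucc : ∀ j : Fin m, g j.succ = 0 := by
    intro j
    have := congrArg (fun y => dotQ (C.cβ j) y) hg
    simp only [dotQ_zero_right] at this
    rw [dotQ_sum_right, Fin.sum_univ_succ] at this
    simp only [Fin.cons_zero, Fin.cons_succ, dotQ_smul_right] at this
    have hsum : ∀ i : Fin m, g i.succ * dotQ (C.cβ j) (C.ωQ i) =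
        if i = j then g i.succ else 0 := by
      intro i; rw [C.dot_cβ_ω]; split <;> ring
    rw [Finset.sum_congr rfl (fun i _ => hsum i), Finset.sum_ite_eq' Finset.univ j
      (fun i => g i.succ)] at this
    rw [C.dot_cβ_ω0] at this
    simpa using this
  intro i
  induction i using Fin.cases with
  | succ j => exact hsucc j
  | zero =>
    have := congrArg (fun y => dotQ C.γQ y) hg
    simp only [dotQ_zero_right] at this
    rw [dotQ_sum_right, Fin.sum_univ_succ] at this
    simp only [Fin.cons_zero, Fin.cons_succ, dotQ_smul_right] at this
    rw [C.dot_γ_ω0] at this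
    have hsum : ∀ i : Fin m, g i.succ * dotQ C.γQ (C.ωQ i) = 0 := by
      intro i; rw [hsucc i]; ring
    rw [Finset.sum_congr rfl (fun i _ => hsum i)] at this
    simpa using this

lemma m_succ_le (C : ACtx n m) : m + 1 ≤ n := by
  have := LinearIndependent.fintype_card_le_finrank C.cw_indep
  rwa [Fintype.card_fin, finrank_QS] at this

/-- the root span is contained in the span of the simple roots -/
lemma Rspan_le_simple :
    C.Rspan ≤ Submodule.span ℚ (Set.range (fun i => cz (C.R.simple i))) := by
  rw [Rspan, Submodule.span_le]
  intro ρ hρ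
  obtain ⟨β, hβ, rfl⟩ := C.exists_of_mem_RQ hρ
  obtain ⟨z, hz, -⟩ := C.root_dichotomy hβ
  rw [hz, cz_sum]
  apply Submodule.sum_mem
  intro i _
  rw [cz_zsmul]
  exact Submodule.smul_mem _ _ (Submodule.subset_span ⟨i, rfl⟩)

lemma finrank_Rspan_le : Module.finrank ℚ C.Rspan ≤ m := by
  classical
  have h1 := Submodule.finrank_mono (R := ℚ) C.Rspan_le_simple
  have h2 : Module.finrank ℚ (Submodule.span ℚ (Set.range (fun i => cz (C.R.simple i)))) ≤ m := by
    have := finrank_span_le_card (R := ℚ) (Set.range (fun i => cz (C.R.simple i)))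
    calc Module.finrank ℚ (Submodule.span ℚ (Set.range (fun i => cz (C.R.simple i))))
        ≤ (Set.range (fun i => cz (C.R.simple i))).toFinset.card := this
      _ ≤ m := by
          rw [Set.toFinset_range]
          calc (Finset.image (fun i => cz (C.R.simple i)) Finset.univ).card
              ≤ Finset.univ.card := Finset.card_image_le
            _ = m := by simp
  exact le_trans h1 h2

lemma n_le_rank_add_one : n ≤ Module.finrank ℚ C.Rspan + 1 := by
  classical
  obtain ⟨Z⟩ := C.hγ.1
  set φz : Lat n → ℤ := fun v => Z (Submodule.Quotient.mk v) with hφz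
  obtain ⟨eq, heq⟩ : ∃ e, φz e = 1 := by
    obtain ⟨x, hx⟩ := Z.surjective 1
    obtain ⟨e, rfl⟩ := Submodule.Quotient.mk_surjective _ x
    exact ⟨e, hx⟩
  have hker : ∀ v : Lat n, v - φz v • eq ∈ C.R.rootSpan := by
    intro v
    rw [← Submodule.Quotient.mk_eq_zero]
    apply Z.injective
    have : Submodule.Quotient.mk (p := C.R.rootSpan) (v - φz v • eq)
        = Submodule.Quotient.mk v - (φz v : ℤ) • Submodule.Quotient.mk eq := by
      rw [Submodule.Quotient.mk_sub, Submodule.Quotient.mk_smul]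
    rw [this, map_sub, map_smul, map_zero]
    show φz v - φz v • φz eq = 0
    rw [heq]
    simp
  have htop : C.Rspan ⊔ Submodule.span ℚ {cz eq} = ⊤ := by
    rw [eq_top_iff]
    intro x _
    have hx := pi_eq_sum_univ x
    rw [hx]
    apply Submodule.sum_mem
    intro i _
    apply Submodule.smul_mem
    have hsingle : (fun j => if i = j then (1:ℚ) else 0) = cz (Pi.single i (1:ℤ)) := by
      funext j
      rw [cz_single, Pi.single_apply]
      by_cases h : i = j
      · subst h; simp
      · rw [if_neg h, if_neg (fun hh => h hh.symm)]
    rw [hsingle]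
    set u : Lat n := Pi.single i (1:ℤ)
    have : cz u = cz (u - φz u • eq) + (φz u : ℚ) • cz eq := by
      rw [cz_sub, cz_zsmul]; abel
    rw [this]
    apply Submodule.add_mem
    · apply Submodule.mem_sup_left
      have := cz_mem_spanQ (s := (C.R.roots : Set (Lat n))) (hker u)
      have hEq : Submodule.span ℚ (cz '' (C.R.roots : Set (Lat n))) = C.Rspan := by
        rw [Rspan, RQ]
        congr 1
        rw [Finset.coe_image]
      rwa [hEq] at this
    · exact Submodule.mem_sup_right (Submodule.smul_mem _ _ (Submodule.subset_span rfl))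
  have hfr := Submodule.finrank_sup_add_finrank_inf_eq C.Rspan (Submodule.span ℚ {cz eq})
  have h1 : Module.finrank ℚ (Submodule.span ℚ {cz eq}) ≤ 1 := by
    by_cases hz : cz eq = 0
    · rw [hz, Submodule.span_zero_singleton]
      simp
    · rw [finrank_span_singleton hz]
  have htopr : Module.finrank ℚ (C.Rspan ⊔ Submodule.span ℚ {cz eq} : Submodule ℚ (QS n)) = n := by
    rw [htop, finrank_top, finrank_QS]
  omega

lemma n_eq (C : ACtx n m) : n = m + 1 := by
  have h1 := C.m_succ_le
  have h2 := C.n_le_rank_add_one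
  have h3 := C.finrank_Rspan_le
  omega

lemma finrank_Rspan : Module.finrank ℚ C.Rspan = m := by
  have h1 := C.m_succ_le
  have h2 := C.n_le_rank_add_one
  have h3 := C.finrank_Rspan_le
  omega

end ACtx

end AutSheaf
namespace AutSheaf

open Foundations

/-- linear functional given by dot with a fixed vector on the right -/
def dotR {n : ℕ} (y : QS n) : QS n →ₗ[ℚ] ℚ where
  toFun x := dotQ x y
  map_add' a b := dotQ_add_left a b y
  map_smul' q a := by simp [dotQ_smul_left]

namespace ACtx

variable {n m : ℕ} (C : ACtx n m)

noncomputable def bCW : Module.Basis (Fin (m+1)) ℚ (QS n) :=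
  basisOfLinearIndependentOfCardEqFinrank C.cw_indep
    (by rw [Fintype.card_fin, finrank_QS, C.n_eq])

lemma bCW_coe : ⇑C.bCW = (Fin.cons C.γQ C.cβ : Fin (m+1) → QS n) :=
  coe_basisOfLinearIndependentOfCardEqFinrank _ _

noncomputable def bW : Module.Basis (Fin (m+1)) ℚ (QS n) :=
  basisOfLinearIndependentOfCardEqFinrank C.w_indep
    (by rw [Fintype.card_fin, finrank_QS, C.n_eq])

lemma bW_coe : ⇑C.bW = (Fin.cons C.ω0Q C.ωQ : Fin (m+1) → QS n) :=
  coe_basisOfLinearIndependentOfCardEqFinrank _ _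

/-- a weight vector orthogonal to `γ` and to all simple coroots is zero -/
lemma w_eq_zero {y : QS n} (h1 : dotQ C.γQ y = 0) (h2 : ∀ i, dotQ (C.cβ i) y = 0) :
    y = 0 := by
  have hz : dotR y = (0 : QS n →ₗ[ℚ] ℚ) := by
    apply C.bCW.ext
    intro k
    rw [bCW_coe]
    induction k using Fin.cases with
    | zero => simpa [dotR, dotQ_comm _ y] using h1
    | succ j => simpa [dotR, dotQ_comm _ y] using h2 j
  funext j
  have := congrArg (fun f : QS n →ₗ[ℚ] ℚ => f (Pi.single j 1)) hz
  simpa [dotR, dotQ_single] using this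

/-- a coweight vector orthogonal to `ω0` and to all `ω i` is zero -/
lemma cw_eq_zero {y : QS n} (h1 : dotQ y C.ω0Q = 0) (h2 : ∀ i, dotQ y (C.ωQ i) = 0) :
    y = 0 := by
  have hz : dotL y = (0 : QS n →ₗ[ℚ] ℚ) := by
    apply C.bW.ext
    intro k
    rw [bW_coe]
    induction k using Fin.cases with
    | zero => simpa [dotL] using h1
    | succ j => simpa [dotL] using h2 j
  funext j
  have := congrArg (fun f : QS n →ₗ[ℚ] ℚ => f (Pi.single j 1)) hz
  simpa [dotL, dotQ_single_right] using this

/-- Decomposition of a coweight in the basis `{γ, coroots of simple roots}`. -/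
lemma cw_decomp (x : QS n) :
    x = dotQ x C.ω0Q • C.γQ
      + ∑ i, (dotQ x (C.ωQ i) - dotQ x C.ω0Q * dotQ C.γQ (C.ωQ i)) • C.cβ i := by
  set cf : Fin m → ℚ := fun i => dotQ x (C.ωQ i) - dotQ x C.ω0Q * dotQ C.γQ (C.ωQ i) with hcf
  set rhs := dotQ x C.ω0Q • C.γQ + ∑ i, cf i • C.cβ i with hrhs
  have h : x - rhs = 0 := by
    apply C.cw_eq_zero
    · rw [dotQ_sub_left, hrhs, dotQ_add_left, dotQ_smul_left, C.dot_γ_ω0, dotQ_sum_left]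
      rw [Finset.sum_congr rfl (fun i _ => by
        rw [dotQ_smul_left, C.dot_cβ_ω0, mul_zero])]
      simp
    · intro i
      have hterm : ∀ j, dotQ (cf j • C.cβ j) (C.ωQ i) = if i = j then cf j else 0 := by
        intro j
        rw [dotQ_smul_left, C.dot_cβ_ω]
        split <;> ring
      rw [dotQ_sub_left, hrhs, dotQ_add_left, dotQ_smul_left, dotQ_sum_left]
      rw [Finset.sum_congr rfl (fun j _ => hterm j), Finset.sum_ite_eq Finset.univ i cf]
      simp only [Finset.mem_univ, if_true]
      rw [hcf]
      ring
  have h2 := sub_eq_zero.1 h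
  rw [h2, hrhs]

/-- Decomposition of a weight in the basis `{ω0, ω i}`. -/
lemma w_decomp (l : QS n) :
    l = (dotQ C.γQ l - ∑ i, dotQ (C.cβ i) l * dotQ C.γQ (C.ωQ i)) • C.ω0Q
      + ∑ i, dotQ (C.cβ i) l • C.ωQ i := by
  set a : ℚ := dotQ C.γQ l - ∑ i, dotQ (C.cβ i) l * dotQ C.γQ (C.ωQ i) with ha
  set rhs := a • C.ω0Q + ∑ i, dotQ (C.cβ i) l • C.ωQ i with hrhs
  have h : l - rhs = 0 := by
    apply C.w_eq_zero
    · rw [dotQ_sub_right, hrhs, dotQ_add_right, dotQ_smul_right, C.dot_γ_ω0, dotQ_sum_right]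
      rw [Finset.sum_congr rfl (fun i _ => by rw [dotQ_smul_right])]
      rw [ha]
      ring
    · intro i
      have hterm : ∀ j, dotQ (C.cβ i) (dotQ (C.cβ j) l • C.ωQ j) =
          if j = i then dotQ (C.cβ j) l else 0 := by
        intro j
        rw [dotQ_smul_right, C.dot_cβ_ω]
        split <;> ring
      rw [dotQ_sub_right, hrhs, dotQ_add_right, dotQ_smul_right, C.dot_cβ_ω0, dotQ_sum_right]
      rw [Finset.sum_congr rfl (fun j _ => hterm j), Finset.sum_ite_eq' Finset.univ i
        (fun j => dotQ (C.cβ j) l)]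
      simp
  have h2 := sub_eq_zero.1 h
  rw [h2, hrhs]

/-! ### the simple roots: independence and span -/

lemma rt_mem_span_aR {β : Lat n} (hβ : β ∈ C.R.roots) :
    C.rt hβ ∈ Submodule.span ℚ (Set.range C.aR) := by
  obtain ⟨z, hz, -⟩ := C.root_dichotomy hβ
  have hcoe : ((C.rt hβ : C.Rspan) : QS n) = ∑ i, (z i : ℚ) • ((C.aR i : C.Rspan) : QS n) := by
    rw [rt_coe, hz, cz_sum]
    apply Finset.sum_congr rfl
    intro i _
    rw [cz_zsmul, aR_coe]
  have : C.rt hβ = ∑ i, (z i : ℚ) • C.aR i := by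
    apply Subtype.ext
    rw [hcoe]
    push_cast [Submodule.coe_sum, Submodule.coe_smul]
    rfl
  rw [this]
  exact Submodule.sum_mem _ fun i _ =>
    Submodule.smul_mem _ _ (Submodule.subset_span ⟨i, rfl⟩)

lemma span_aR_top : Submodule.span ℚ (Set.range C.aR) = ⊤ := by
  rw [eq_top_iff, ← C.span_top, Submodule.span_le]
  intro x hx
  obtain ⟨β, hβ, hcz⟩ := C.exists_of_mem_RQ hx
  have : x = C.rt hβ := Subtype.ext hcz.symm
  rw [this]
  exact C.rt_mem_span_aR hβ

lemma aR_indep : LinearIndependent ℚ C.aR := by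
  apply linearIndependent_of_top_le_span_of_card_eq_finrank
  · rw [C.span_aR_top]
  · rw [Fintype.card_fin, C.finrank_Rspan]

lemma simpleQ_indep : LinearIndependent ℚ (fun i => cz (C.R.simple i)) := by
  have := C.aR_indep.map' C.Rspan.subtype (Submodule.ker_subtype _)
  exact this

/-- integer-coefficient uniqueness for combinations of simple roots -/
lemma simple_comb_injective {z z' : Fin m → ℤ}
    (h : ∑ i, z i • C.R.simple i = ∑ i, z' i • C.R.simple i) : z = z' := by
  have hq : ∑ i, ((z i : ℚ) - (z' i : ℚ)) • cz (C.R.simple i) = 0 := by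
    have hcz := congrArg cz h
    rw [cz_sum, cz_sum] at hcz
    have h1 : ∀ i, cz (z i • C.R.simple i) = (z i : ℚ) • cz (C.R.simple i) := fun i => cz_zsmul _ _
    have h2 : ∀ i, cz (z' i • C.R.simple i) = (z' i : ℚ) • cz (C.R.simple i) := fun i => cz_zsmul _ _
    rw [Finset.sum_congr rfl (fun i _ => h1 i), Finset.sum_congr rfl (fun i _ => h2 i)] at hcz
    rw [Finset.sum_congr rfl (fun i _ => sub_smul ((z i : ℚ)) ((z' i : ℚ)) (cz (C.R.simple i))),
      Finset.sum_sub_distrib, hcz, sub_self]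
  have := Fintype.linearIndependent_iff.1 C.simpleQ_indep _ hq
  funext i
  have hi := this i
  have : (z i : ℚ) = (z' i : ℚ) := by linarith [hi]
  exact_mod_cast this

end ACtx

end AutSheaf
namespace AutSheaf

open Foundations

section PairInt

variable {n : ℕ}

lemma pair_add_left (a b w : Lat n) : pair (a + b) w = pair a w + pair b w := by
  simp [pair, add_mul, Finset.sum_add_distrib]

lemma pair_sub_left (a b w : Lat n) : pair (a - b) w = pair a w - pair b w := by
  simp [pair, sub_mul, Finset.sum_sub_distrib]

lemma pair_add_right (a w v : Lat n) : pair a (w + v) = pair a w + pair a v := by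
  simp [pair, mul_add, Finset.sum_add_distrib]

lemma pair_sub_right (a w v : Lat n) : pair a (w - v) = pair a w - pair a v := by
  simp [pair, mul_sub, Finset.sum_sub_distrib]

lemma pair_zsmul_left (k : ℤ) (a w : Lat n) : pair (k • a) w = k * pair a w := by
  simp [pair, Finset.mul_sum, mul_assoc]

lemma pair_nsmul_left (k : ℕ) (a w : Lat n) : pair (k • a) w = k * pair a w := by
  simp [pair, Finset.mul_sum, mul_assoc]

lemma pair_neg_left (a w : Lat n) : pair (-a) w = -pair a w := by
  simp [pair, Finset.sum_neg_distrib]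

lemma pair_zero_left (w : Lat n) : pair 0 w = 0 := by simp [pair]

lemma pair_sum_left {ι : Type*} (s : Finset ι) (f : ι → Lat n) (w : Lat n) :
    pair (∑ i ∈ s, f i) w = ∑ i ∈ s, pair (f i) w := by
  simp [pair]
  rw [Finset.sum_comm]
  apply Finset.sum_congr rfl; intros
  simp [Finset.sum_mul]

end PairInt

namespace ACtx

variable {n m : ℕ} (C : ACtx n m)

/-- `B` as a linear functional in the second variable -/
noncomputable def Blin (z : C.Rspan) : C.Rspan →ₗ[ℚ] ℚ where
  toFun y := C.B z y
  map_add' a b := C.B_add_right z a b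
  map_smul' q a := by simp [C.B_smul_right]

/-- A coweight vector orthogonal to `ω0` and to all roots is zero. -/
lemma perp_zero {x : QS n} (h0 : dotQ x C.ω0Q = 0)
    (hr : ∀ β ∈ C.R.roots, dotQ x (cz β) = 0) : x = 0 := by
  classical
  set s : Fin m → ℚ := fun i => dotQ x (C.ωQ i) with hs
  have hx2 : x = ∑ i, s i • C.cβ i := by
    have hx := C.cw_decomp x
    rw [h0] at hx
    simpa using hx
  set Bii : Fin m → ℚ := fun i => C.B (C.aR i) (C.aR i) with hBiidef
  have hBii : ∀ i, 0 < Bii i := fun i => C.B_rt_pos _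
  set ζ : C.Rspan := ∑ i, (2 * s i / Bii i) • C.aR i with hζ
  -- the two linear functionals agree on the generators of Rspan
  have hfun : C.Blin ζ = (dotL x).comp C.Rspan.subtype := by
    apply LinearMap.ext_on C.span_top
    intro y hy
    obtain ⟨β, hβ, hcz⟩ := C.exists_of_mem_RQ hy
    have hy2 : y = C.rt hβ := Subtype.ext hcz.symm
    subst hy2
    show C.B ζ (C.rt hβ) = dotL x (C.Rspan.subtype (C.rt hβ))
    have hBsum : C.B ζ (C.rt hβ) = ∑ i, (2 * s i / Bii i) * C.B (C.aR i) (C.rt hβ) := by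
      rw [hζ, B_sum_left]
      exact Finset.sum_congr rfl fun i _ => C.B_smul_left _ _ _
    have hrefl : ∀ i, dotQ (C.cβ i) (cz β) * Bii i = 2 * C.B (C.aR i) (C.rt hβ) :=
      fun i => C.refl_formula (C.R.simple_mem i) (C.rt hβ)
    have hBterm : ∀ i, (2 * s i / Bii i) * C.B (C.aR i) (C.rt hβ)
        = s i * dotQ (C.cβ i) (cz β) := by
      intro i
      have hne := (hBii i).ne'
      have h2B : C.B (C.aR i) (C.rt hβ) = dotQ (C.cβ i) (cz β) * Bii i / 2 := by
        linarith [hrefl i]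
      rw [h2B]
      field_simp
    rw [hBsum, Finset.sum_congr rfl (fun i _ => hBterm i)]
    show _ = dotQ x (cz β)
    rw [hx2, dotQ_sum_left]
    exact (Finset.sum_congr rfl fun i _ => (dotQ_smul_left _ _ _).symm)
  -- evaluate at ζ
  have hζζ : C.B ζ ζ = dotQ x ((ζ : C.Rspan) : QS n) := by
    have := congrArg (fun f : C.Rspan →ₗ[ℚ] ℚ => f ζ) hfun
    simpa [Blin, dotL] using this
  have hxζ : dotQ x ((ζ : C.Rspan) : QS n) = 0 := by
    have hcoe : ((ζ : C.Rspan) : QS n) = ∑ i, (2 * s i / Bii i) • cz (C.R.simple i) := by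
      rw [hζ]
      push_cast [Submodule.coe_sum, Submodule.coe_smul]
      rfl
    rw [hcoe, dotQ_sum_right]
    apply Finset.sum_eq_zero
    intro i _
    rw [dotQ_smul_right, hr _ (C.R.simple_mem i), mul_zero]
  have hζ0 : ζ = 0 := C.B_eq_zero_self (by rw [hζζ, hxζ])
  have hcoef := Fintype.linearIndependent_iff.1 C.aR_indep (fun i => 2 * s i / Bii i)
    (by rw [← hζ, hζ0])
  have hs0 : ∀ i, s i = 0 := by
    intro i
    have h := hcoef i
    have hne := (hBii i).ne'
    rw [div_eq_zero_iff] at h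
    rcases h with h | h
    · linarith
    · exact absurd h hne
  rw [hx2]
  apply Finset.sum_eq_zero
  intro i _
  rw [hs0 i, zero_smul]

/-- The coroot of any root is the combination of simple coroots with coefficients
`pair (coroot β) (ω i)`, and these are explicitly computed by `B`. -/
lemma coroot_expand {β : Lat n} (hβ : β ∈ C.R.roots) {z : Fin m → ℤ}
    (hz : β = ∑ i, z i • C.R.simple i) :
    (∀ i, (pair (C.R.coroot β) (C.ω i) : ℚ)
        = (z i : ℚ) * C.B (C.aR i) (C.aR i) / C.B (C.rt hβ) (C.rt hβ))
    ∧ C.R.coroot β = ∑ i, pair (C.R.coroot β) (C.ω i) • C.R.coroot (C.R.simple i) := by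
  classical
  set Bii : Fin m → ℚ := fun i => C.B (C.aR i) (C.aR i) with hBiidef
  have hBii : ∀ i, 0 < Bii i := fun i => C.B_rt_pos _
  set Bβ : ℚ := C.B (C.rt hβ) (C.rt hβ) with hBβdef
  have hBβ : 0 < Bβ := C.B_rt_pos _
  set q : Fin m → ℚ := fun i => (z i : ℚ) * Bii i / Bβ with hq
  have hrtβ : C.rt hβ = ∑ i, (z i : ℚ) • C.aR i := by
    apply Subtype.ext
    rw [rt_coe, hz, cz_sum]
    push_cast [Submodule.coe_sum, Submodule.coe_smul]
    apply Finset.sum_congr rfl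
    intro i _
    rw [cz_zsmul, aR_coe]
  set x : QS n := cz (C.R.coroot β) - ∑ i, q i • C.cβ i with hx
  have hx0 : x = 0 := by
    apply C.perp_zero
    · rw [hx, dotQ_sub_left, dotQ_sum_left]
      rw [Finset.sum_congr rfl (fun i _ => by rw [dotQ_smul_left, C.dot_cβ_ω0, mul_zero])]
      rw [ω0Q, dotQ_cast, C.hω0orth β hβ]
      simp
    · intro ρ hρ
      have hreflβ : dotQ (cz (C.R.coroot β)) (cz ρ) * Bβ = 2 * C.B (C.rt hβ) (C.rt hρ) :=
        C.refl_formula hβ (C.rt hρ)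
      have hrefli : ∀ i, dotQ (C.cβ i) (cz ρ) * Bii i = 2 * C.B (C.aR i) (C.rt hρ) :=
        fun i => C.refl_formula (C.R.simple_mem i) (C.rt hρ)
      have hBζ : C.B (C.rt hβ) (C.rt hρ) = ∑ i, (z i : ℚ) * C.B (C.aR i) (C.rt hρ) := by
        rw [hrtβ, B_sum_left]
        exact Finset.sum_congr rfl fun i _ => C.B_smul_left _ _ _
      rw [hx, dotQ_sub_left, dotQ_sum_left]
      have hterm : ∀ i, dotQ (q i • C.cβ i) (cz ρ)
          = (z i : ℚ) * (2 * C.B (C.aR i) (C.rt hρ)) / Bβ := by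
        intro i
        have hne := (hBii i).ne'
        have hBne := hBβ.ne'
        have h2B : dotQ (C.cβ i) (cz ρ) = 2 * C.B (C.aR i) (C.rt hρ) / Bii i := by
          field_simp
          linarith [hrefli i]
        rw [dotQ_smul_left, hq, h2B]
        field_simp
      rw [Finset.sum_congr rfl (fun i _ => hterm i)]
      have hdot : dotQ (cz (C.R.coroot β)) (cz ρ) = 2 * C.B (C.rt hβ) (C.rt hρ) / Bβ := by
        field_simp
        linarith [hreflβ]
      rw [hdot, hBζ]
      rw [Finset.mul_sum, Finset.sum_div]
      rw [← Finset.sum_sub_distrib]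
      apply Finset.sum_eq_zero
      intro i _
      ring
  have hxeq : cz (C.R.coroot β) = ∑ i, q i • C.cβ i := by
    have := sub_eq_zero.1 hx0
    exact this
  have hpair : ∀ j, (pair (C.R.coroot β) (C.ω j) : ℚ) = q j := by
    intro j
    have := congrArg (fun y => dotQ y (C.ωQ j)) hxeq
    rw [dotQ_sum_left] at this
    have hterm : ∀ i, dotQ (q i • C.cβ i) (C.ωQ j) = if j = i then q i else 0 := by
      intro i
      rw [dotQ_smul_left, C.dot_cβ_ω]
      split <;> ring
    rw [Finset.sum_congr rfl (fun i _ => hterm i), Finset.sum_ite_eq Finset.univ j q] at this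
    simp only [Finset.mem_univ, if_true] at this
    rw [← this, ωQ, dotQ_cast]
  constructor
  · exact hpair
  · apply cz_inj
    rw [cz_sum, hxeq]
    apply Finset.sum_congr rfl
    intro i _
    rw [cz_zsmul, ← hpair i, cβ]

/-- For a positive root, the coefficients are nonnegative. -/
lemma coroot_pos_expand {β : Lat n} (hβ : β ∈ C.R.posRoots) :
    (∀ i, 0 ≤ pair (C.R.coroot β) (C.ω i))
    ∧ C.R.coroot β = ∑ i, pair (C.R.coroot β) (C.ω i) • C.R.coroot (C.R.simple i) := by
  obtain ⟨hroot, c, hc⟩ := C.mem_posRoots_iff.1 hβ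
  have hz : β = ∑ i, ((fun i => (c i : ℤ)) i) • C.R.simple i := hc
  obtain ⟨h1, h2⟩ := C.coroot_expand hroot hz
  refine ⟨fun i => ?_, h2⟩
  have := h1 i
  have hq : (0:ℚ) ≤ (((c i : ℤ)) : ℚ) * C.B (C.aR i) (C.aR i) / C.B (C.rt hroot) (C.rt hroot) := by
    apply div_nonneg
    · exact mul_nonneg (by positivity) (le_of_lt (C.B_rt_pos _))
    · exact le_of_lt (C.B_rt_pos _)
  rw [← this] at hq
  exact_mod_cast hq

/-- Elements of the coroot lattice: orthogonal to ω0 and expanded by simple coroots. -/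
lemma corootSpan_mem {x : Lat n} (hx : x ∈ C.R.corootSpan) :
    pair x C.ω0 = 0 ∧ x = ∑ i, pair x (C.ω i) • C.R.coroot (C.R.simple i) := by
  induction hx using Submodule.span_induction with
  | mem y hy =>
      obtain ⟨β, hβ, rfl⟩ := hy
      obtain ⟨z, hz, -⟩ := C.root_dichotomy hβ
      exact ⟨C.hω0orth β hβ, (C.coroot_expand hβ hz).2⟩
  | zero =>
      constructor
      · exact pair_zero_left _
      · rw [Finset.sum_congr rfl (fun i _ => by rw [pair_zero_left, zero_smul])]
        simp
  | add a b _ _ ha hb =>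
      constructor
      · rw [pair_add_left, ha.1, hb.1]; ring
      · nth_rewrite 1 [ha.2]
        nth_rewrite 1 [hb.2]
        rw [← Finset.sum_add_distrib]
        apply Finset.sum_congr rfl
        intro i _
        rw [pair_add_left, add_smul]
  | smul k a _ ha =>
      constructor
      · rw [pair_zsmul_left, ha.1]; ring
      · nth_rewrite 1 [ha.2]
        rw [Finset.smul_sum]
        apply Finset.sum_congr rfl
        intro i _
        rw [pair_zsmul_left, mul_smul]

end ACtx

end AutSheaf
namespace AutSheaf

open Foundations

namespace ACtx

variable {n m : ℕ} (C : ACtx n m)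

/-- property package for a Weyl group element -/
structure WP (w : Equiv.Perm (Lat n)) : Prop where
  addf : ∀ a b : Lat n, w (a + b) = w a + w b
  mem : ∀ v : Lat n, w v - v ∈ C.R.corootSpan
  adj : ∃ φ : QS n →ₗ[ℚ] QS n,
    (∀ (x : Lat n) (l : QS n), dotQ (cz (w x)) l = dotQ (cz x) (φ l)) ∧
    (∀ ρ ∈ C.RQ, φ ρ ∈ C.RQ) ∧
    ∃ g ∈ C.K, ∀ x : C.Rspan, ((g x : C.Rspan) : QS n) = φ (x : QS n)

lemma srefl_apply (j : Fin m) (v : Lat n) :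
    (C.R.srefl j) v = v - pair v (C.R.simple j) • C.R.coroot (C.R.simple j) := rfl

lemma coroot_simple_mem_span (j : Fin m) :
    C.R.coroot (C.R.simple j) ∈ C.R.corootSpan :=
  Submodule.subset_span ⟨C.R.simple j, C.R.simple_mem j, rfl⟩

lemma WP_srefl (j : Fin m) : C.WP (C.R.srefl j) := by
  constructor
  · intro a b
    rw [srefl_apply, srefl_apply, srefl_apply, pair_add_left, add_smul]
    abel
  · intro v
    rw [srefl_apply]
    have : v - pair v (C.R.simple j) • C.R.coroot (C.R.simple j) - v
        = (-pair v (C.R.simple j)) • C.R.coroot (C.R.simple j) := by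
      rw [neg_smul]; abel
    rw [this]
    exact Submodule.smul_mem _ _ (C.coroot_simple_mem_span j)
  · refine ⟨C.σQ (C.R.simple j), ?_, fun ρ hρ => C.σQ_mem_RQ (C.R.simple_mem j) hρ,
      C.σR (C.R.simple_mem j), C.σR_mem_K _, fun x => (C.σR_coe (C.R.simple_mem j) x)⟩
    intro x l
    rw [srefl_apply, cz_sub, cz_zsmul, dotQ_sub_left, dotQ_smul_left, σQ_apply,
      dotQ_sub_right, dotQ_smul_right, dotQ_cast]
    ring

lemma WP_one : C.WP 1 := by
  constructor
  · intro a b; rfl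
  · intro v
    have : (1 : Equiv.Perm (Lat n)) v - v = 0 := by
      rw [Equiv.Perm.one_apply]; abel
    rw [this]
    exact Submodule.zero_mem _
  · exact ⟨LinearMap.id, fun x l => rfl, fun ρ hρ => hρ, 1, one_mem _, fun x => rfl⟩

lemma WP_mul {u v : Equiv.Perm (Lat n)} (hu : C.WP u) (hv : C.WP v) : C.WP (u * v) := by
  obtain ⟨φu, hφu, hφuR, gu, hguK, hguc⟩ := hu.adj
  obtain ⟨φv, hφv, hφvR, gv, hgvK, hgvc⟩ := hv.adj
  constructor
  · intro a b
    rw [Equiv.Perm.mul_apply, Equiv.Perm.mul_apply, Equiv.Perm.mul_apply, hv.addf, hu.addf]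
  · intro w
    rw [Equiv.Perm.mul_apply]
    have : u (v w) - w = (u (v w) - v w) + (v w - w) := by abel
    rw [this]
    exact Submodule.add_mem _ (hu.mem _) (hv.mem _)
  · refine ⟨φv.comp φu, ?_, ?_, gv * gu, mul_mem hgvK hguK, ?_⟩
    · intro x l
      rw [Equiv.Perm.mul_apply, hφu, hφv]
      rfl
    · intro ρ hρ
      exact hφvR _ (hφuR _ hρ)
    · intro x
      rw [Module.End.mul_apply, hgvc, hguc]
      rfl

lemma srefl_inv (j : Fin m) : (C.R.srefl j)⁻¹ = C.R.srefl j :=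
  Equiv.ext fun v => rfl

lemma weyl_WP {w : Equiv.Perm (Lat n)} (hw : w ∈ C.R.weyl) : C.WP w ∧ C.WP w⁻¹ := by
  induction hw using Subgroup.closure_induction with
  | mem x hx =>
      obtain ⟨j, rfl⟩ := hx
      exact ⟨C.WP_srefl j, by rw [C.srefl_inv j]; exact C.WP_srefl j⟩
  | one => exact ⟨C.WP_one, by rw [inv_one]; exact C.WP_one⟩
  | mul x y _ _ hx hy =>
      exact ⟨C.WP_mul hx.1 hy.1, by rw [mul_inv_rev]; exact C.WP_mul hy.2 hx.2⟩
  | inv x _ hx => exact ⟨hx.2, by rw [inv_inv]; exact hx.1⟩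

/-- data package for the longest element `w0` -/
structure W0Data where
  φ0 : QS n →ₗ[ℚ] QS n
  ψ0 : QS n →ₗ[ℚ] QS n
  g0 : Module.End ℚ C.Rspan
  h0 : Module.End ℚ C.Rspan
  hadd : ∀ a b : Lat n, C.w0 (a + b) = C.w0 a + C.w0 b
  haddi : ∀ a b : Lat n, C.w0⁻¹ (a + b) = C.w0⁻¹ a + C.w0⁻¹ b
  hmem : ∀ v : Lat n, C.w0 v - v ∈ C.R.corootSpan
  hmemi : ∀ v : Lat n, C.w0⁻¹ v - v ∈ C.R.corootSpan
  hφ : ∀ (x : Lat n) (l : QS n), dotQ (cz (C.w0 x)) l = dotQ (cz x) (φ0 l)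
  hψ : ∀ (x : Lat n) (l : QS n), dotQ (cz (C.w0⁻¹ x)) l = dotQ (cz x) (ψ0 l)
  hφR : ∀ ρ ∈ C.RQ, φ0 ρ ∈ C.RQ
  hψR : ∀ ρ ∈ C.RQ, ψ0 ρ ∈ C.RQ
  hg0K : g0 ∈ C.K
  hh0K : h0 ∈ C.K
  hg0c : ∀ x : C.Rspan, ((g0 x : C.Rspan) : QS n) = φ0 (x : QS n)
  hh0c : ∀ x : C.Rspan, ((h0 x : C.Rspan) : QS n) = ψ0 (x : QS n)
  hφψ : ∀ l : QS n, φ0 (ψ0 l) = l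
  hψφ : ∀ l : QS n, ψ0 (φ0 l) = l
  hgh : g0 * h0 = 1
  hhg : h0 * g0 = 1

theorem _root_.Equiv.Perm.inv_apply_self {α : Type*} (f : Equiv.Perm α) (x : α) :
    f⁻¹ (f x) = x := Equiv.symm_apply_apply f x

theorem _root_.Equiv.Perm.apply_inv_self {α : Type*} (f : Equiv.Perm α) (x : α) :
    f (f⁻¹ x) = x := Equiv.apply_symm_apply f x

lemma dot_test {a b : QS n} (h : ∀ x : Lat n, dotQ (cz x) a = dotQ (cz x) b) : a = b := by
  funext k
  have := h (Pi.single k 1)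
  rwa [cz_single, dotQ_single, dotQ_single] at this

lemma exists_w0data : Nonempty C.W0Data := by
  obtain ⟨hW, hWi⟩ := C.weyl_WP C.hw0
  obtain ⟨φ0, hφ, hφR, g0, hg0K, hg0c⟩ := hW.adj
  obtain ⟨ψ0, hψ, hψR, h0, hh0K, hh0c⟩ := hWi.adj
  have hφψ : ∀ l : QS n, φ0 (ψ0 l) = l := by
    intro l
    apply dot_test
    intro x
    rw [← hφ, ← hψ, Equiv.Perm.inv_apply_self]
  have hψφ : ∀ l : QS n, ψ0 (φ0 l) = l := by
    intro l
    apply dot_test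
    intro x
    rw [← hψ, ← hφ, Equiv.Perm.apply_inv_self]
  have hgh : g0 * h0 = 1 := by
    apply LinearMap.ext
    intro x
    apply Subtype.ext
    rw [Module.End.mul_apply, hg0c, hh0c, hφψ]
    rfl
  have hhg : h0 * g0 = 1 := by
    apply LinearMap.ext
    intro x
    apply Subtype.ext
    rw [Module.End.mul_apply, hh0c, hg0c, hψφ]
    rfl
  exact ⟨⟨φ0, ψ0, g0, h0, hW.addf, hWi.addf, hW.mem, hWi.mem, hφ, hψ, hφR, hψR,
    hg0K, hh0K, hg0c, hh0c, hφψ, hψφ, hgh, hhg⟩⟩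

end ACtx

end AutSheaf
namespace AutSheaf

open Foundations

section PairInt2

variable {n : ℕ}

lemma pair_zsmul_right (k : ℤ) (a w : Lat n) : pair a (k • w) = k * pair a w := by
  simp [pair, Finset.mul_sum]
  apply Finset.sum_congr rfl; intros; ring

lemma pair_neg_right (a w : Lat n) : pair a (-w) = -pair a w := by
  simp [pair, Finset.sum_neg_distrib]

lemma pair_sum_right {ι : Type*} (s : Finset ι) (a : Lat n) (f : ι → Lat n) :
    pair a (∑ i ∈ s, f i) = ∑ i ∈ s, pair a (f i) := by
  simp [pair]
  rw [Finset.sum_comm]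
  apply Finset.sum_congr rfl; intros
  simp [Finset.mul_sum]

end PairInt2

namespace ACtx

variable {n m : ℕ} (C : ACtx n m)

/-- a strictly dominant coweight exists -/
lemma exists_strict_dominant :
    ∃ (v : Lat n) (N : ℕ), 0 < N ∧ ∀ j, pair v (C.R.simple j) = N := by
  classical
  set Bii : Fin m → ℚ := fun i => C.B (C.aR i) (C.aR i) with hBiidef
  have hBii : ∀ i, 0 < Bii i := fun i => C.B_rt_pos _
  set A : Fin m → Fin m → ℚ := fun i j => dotQ (C.cβ i) (cz (C.R.simple j)) with hA
  set T : (Fin m → ℚ) →ₗ[ℚ] (Fin m → ℚ) :=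
    { toFun := fun y => fun j => ∑ i, y i * A i j
      map_add' := by
        intro a b; funext j; simp [add_mul, Finset.sum_add_distrib]
      map_smul' := by
        intro q a; funext j; simp [Finset.mul_sum, mul_assoc] } with hT
  have hTinj : Function.Injective T := by
    rw [← LinearMap.ker_eq_bot, LinearMap.ker_eq_bot']
    intro y hy
    set ζ : C.Rspan := ∑ i, (2 * y i / Bii i) • C.aR i with hζ
    have hBζ : ∀ j, C.B ζ (C.aR j) = ∑ i, y i * A i j := by
      intro j
      rw [hζ, B_sum_left]
      apply Finset.sum_congr rfl
      intro i _
      rw [B_smul_left]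
      have hrefl : A i j * Bii i = 2 * C.B (C.aR i) (C.aR j) :=
        C.refl_formula (C.R.simple_mem i) (C.aR j)
      have hne := (hBii i).ne'
      have h2B : C.B (C.aR i) (C.aR j) = A i j * Bii i / 2 := by
        linarith [hrefl]
      rw [h2B]
      field_simp
    have hBζ0 : ∀ j, C.B ζ (C.aR j) = 0 := by
      intro j
      rw [hBζ j]
      have := congrFun hy j
      simpa [hT] using this
    have hblin : C.Blin ζ = 0 := by
      apply LinearMap.ext_on (C.span_aR_top)
      rintro x ⟨i, rfl⟩
      simpa [Blin] using hBζ0 i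
    have hζ0 : ζ = 0 := by
      apply C.B_eq_zero_self
      have := congrArg (fun f : C.Rspan →ₗ[ℚ] ℚ => f ζ) hblin
      simpa [Blin] using this
    have hcoef := Fintype.linearIndependent_iff.1 C.aR_indep (fun i => 2 * y i / Bii i)
      (by rw [← hζ, hζ0])
    funext i
    have h := hcoef i
    have hne := (hBii i).ne'
    rw [div_eq_zero_iff] at h
    rcases h with h | h
    · simpa using by linarith
    · exact absurd h hne
  have hTsurj : Function.Surjective T := (LinearMap.injective_iff_surjective).1 hTinj
  obtain ⟨y, hy⟩ := hTsurj (fun _ => 1)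
  set u : QS n := ∑ i, y i • C.cβ i with hu
  have hud : ∀ j, dotQ u (cz (C.R.simple j)) = 1 := by
    intro j
    rw [hu, dotQ_sum_left]
    rw [Finset.sum_congr rfl (fun i _ => dotQ_smul_left (y i) (C.cβ i) (cz (C.R.simple j)))]
    have := congrFun hy j
    simpa [hT, hA] using this
  obtain ⟨N, v, hN, hv⟩ := rat_clear u
  refine ⟨v, N, hN, fun j => ?_⟩
  have : dotQ (cz v) (cz (C.R.simple j)) = N := by
    rw [hv, dotQ_smul_left, hud, mul_one]
  rw [dotQ_cast] at this
  exact_mod_cast this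

lemma not_pos_and_neg {β : Lat n} (hβ : β ∈ C.R.roots) {c d : Fin m → ℕ}
    (hc : β = ∑ i, (c i : ℤ) • C.R.simple i)
    (hd : β = -∑ i, (d i : ℤ) • C.R.simple i) : False := by
  have hsum : ∑ i, ((c i : ℤ) + (d i : ℤ)) • C.R.simple i = ∑ i, (0:ℤ) • C.R.simple i := by
    rw [Finset.sum_congr rfl (fun i _ => add_smul ((c i : ℤ)) ((d i : ℤ)) (C.R.simple i)),
      Finset.sum_add_distrib, ← hc]
    have : ∑ i, (d i : ℤ) • C.R.simple i = -β := by rw [hd]; ring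
    rw [this]
    simp
  have := C.simple_comb_injective hsum
  have hz : ∀ i, (c i : ℤ) = 0 := by
    intro i
    have hi := congrFun this i
    omega
  apply C.R.root_ne_zero β hβ
  rw [hc]
  apply Finset.sum_eq_zero
  intro i _
  rw [hz i, zero_smul]

lemma neg_mem_posRoots {β : Lat n} (hβ : β ∈ C.R.roots) (h : β ∉ C.R.posRoots) :
    -β ∈ C.R.posRoots := by
  rcases C.R.root_comb β hβ with ⟨c, hc⟩ | ⟨c, hc⟩
  · exact absurd (C.mem_posRoots_iff.2 ⟨hβ, c, hc⟩) h
  · apply C.mem_posRoots_iff.2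
    refine ⟨C.R.neg_mem β hβ, c, ?_⟩
    rw [hc, neg_neg]

lemma pos_pair_strict {β : Lat n} (hβ : β ∈ C.R.posRoots) {v : Lat n} {N : ℕ}
    (hN : 0 < N) (hv : ∀ j, pair v (C.R.simple j) = N) : 0 < pair v β := by
  obtain ⟨hroot, c, hc⟩ := C.mem_posRoots_iff.1 hβ
  have hcnz : ∃ i, 0 < c i := by
    by_contra hno
    push_neg at hno
    apply C.R.root_ne_zero β hroot
    rw [hc]
    apply Finset.sum_eq_zero
    intro i _
    have : c i = 0 := Nat.le_zero.1 (hno i)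
    rw [this]; simp
  obtain ⟨i0, hi0⟩ := hcnz
  rw [hc, pair_sum_right]
  have hterm : ∀ i, pair v ((c i : ℤ) • C.R.simple i) = (c i : ℤ) * N := by
    intro i; rw [pair_zsmul_right, hv]
  rw [Finset.sum_congr rfl (fun i _ => hterm i)]
  have hle : (c i0 : ℤ) * N ≤ ∑ i, (c i : ℤ) * N :=
    Finset.single_le_sum (f := fun i => (c i : ℤ) * N) (fun i _ => by positivity)
      (Finset.mem_univ i0)
  have : (0:ℤ) < (c i0 : ℤ) * N := by positivity
  linarith

/-- `φ0` (the adjoint of `w0`) maps positive roots to negative roots. -/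
lemma adj_pos_neg (D : C.W0Data) {β : Lat n} (hβ : β ∈ C.R.posRoots) :
    ∃ β' ∈ C.R.roots, D.φ0 (cz β) = cz β' ∧ -β' ∈ C.R.posRoots := by
  obtain ⟨hroot, c, hc⟩ := C.mem_posRoots_iff.1 hβ
  obtain ⟨β', hβ', hcz⟩ := C.exists_of_mem_RQ (D.hφR _ (C.mem_RQ hroot))
  refine ⟨β', hβ', hcz.symm, ?_⟩
  obtain ⟨v, N, hN, hv⟩ := C.exists_strict_dominant
  have hdom : C.R.IsDominant v := fun i => by rw [hv i]; positivity
  have hw0v := C.hw0d v hdom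
  have hpair : pair (C.w0 v) β ≤ 0 := by
    rw [hc, pair_sum_right]
    apply Finset.sum_nonpos
    intro i _
    rw [pair_zsmul_right]
    have hneg := hw0v i
    rw [pair_neg_left] at hneg
    have : pair (C.w0 v) (C.R.simple i) ≤ 0 := by linarith
    have hci : (0:ℤ) ≤ (c i : ℤ) := Int.natCast_nonneg _
    exact mul_nonpos_of_nonneg_of_nonpos hci this
  have hdot : dotQ (cz v) (cz β') = (pair (C.w0 v) β : ℚ) := by
    rw [hcz, ← D.hφ v (cz β), dotQ_cast]
  apply C.neg_mem_posRoots hβ'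
  intro hpos
  have := C.pos_pair_strict hpos hN hv
  have hle : (pair v β' : ℚ) ≤ 0 := by
    rw [← dotQ_cast, hdot]
    exact_mod_cast hpair
  have : (0:ℚ) < (pair v β' : ℚ) := by exact_mod_cast this
  linarith

/-- `ψ0` (the adjoint of `w0⁻¹`) maps positive roots to negative roots. -/
lemma adji_pos_neg (D : C.W0Data) {β : Lat n} (hβ : β ∈ C.R.posRoots) :
    ∃ β' ∈ C.R.roots, D.ψ0 (cz β) = cz β' ∧ -β' ∈ C.R.posRoots := by
  obtain ⟨hroot, -, -⟩ := C.mem_posRoots_iff.1 hβ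
  obtain ⟨β', hβ', hcz⟩ := C.exists_of_mem_RQ (D.hψR _ (C.mem_RQ hroot))
  refine ⟨β', hβ', hcz.symm, ?_⟩
  apply C.neg_mem_posRoots hβ'
  intro hpos
  obtain ⟨β'', hβ'', hφβ'', hnegpos⟩ := C.adj_pos_neg D hpos
  have : cz β = cz β'' := by
    rw [← D.hφψ (cz β), ← hcz, hφβ'']
  have hββ'' : β = β'' := cz_inj this
  subst hββ''
  obtain ⟨-, c, hc⟩ := C.mem_posRoots_iff.1 hβ
  obtain ⟨hnegroot, d, hd⟩ := C.mem_posRoots_iff.1 hnegpos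
  have hd2 : β = -∑ i, (d i : ℤ) • C.R.simple i := by rw [← hd, neg_neg]
  exact C.not_pos_and_neg hroot hc hd2

end ACtx

end AutSheaf
namespace AutSheaf

open Foundations

namespace ACtx

variable {n m : ℕ} (C : ACtx n m)

lemma pair_corootSpan_ω0 {x : Lat n} (hx : x ∈ C.R.corootSpan) : pair x C.ω0 = 0 :=
  (C.corootSpan_mem hx).1

lemma pair_w0_ω0 (D : C.W0Data) (v : Lat n) : pair (C.w0 v) C.ω0 = pair v C.ω0 := by
  have h := C.pair_corootSpan_ω0 (D.hmem v)
  rw [pair_sub_left] at h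
  linarith

lemma pair_w0i_ω0 (D : C.W0Data) (v : Lat n) : pair (C.w0⁻¹ v) C.ω0 = pair v C.ω0 := by
  have h := C.pair_corootSpan_ω0 (D.hmemi v)
  rw [pair_sub_left] at h
  linarith

/-- `w0` sends the coroot of a simple root to a negative multiple of the coroot
of a positive root. -/
lemma w0_coroot_simple (D : C.W0Data) (j : Fin m) :
    ∃ (p : Lat n) (r : ℚ), p ∈ C.R.posRoots ∧ 0 < r ∧
      cz (C.w0 (C.R.coroot (C.R.simple j))) = -(r • cz (C.R.coroot p)) := by
  obtain ⟨μ, hμ, hψμ, hnegμ⟩ := C.adji_pos_neg D (C.simple_mem_posRoots j)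
  set Bjj : ℚ := C.B (C.aR j) (C.aR j) with hBjj
  set Bμ : ℚ := C.B (C.rt hμ) (C.rt hμ) with hBμ
  have hBjjpos : 0 < Bjj := C.B_rt_pos _
  have hBμpos : 0 < Bμ := C.B_rt_pos _
  set r : ℚ := Bμ / Bjj with hr
  have hrpos : 0 < r := by positivity
  have hkey : cz (C.w0 (C.R.coroot (C.R.simple j))) = r • cz (C.R.coroot μ) := by
    have hx0 : cz (C.w0 (C.R.coroot (C.R.simple j))) - r • cz (C.R.coroot μ) = 0 := by
      apply C.perp_zero
      · rw [dotQ_sub_left, dotQ_smul_left]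
        rw [show C.ω0Q = cz C.ω0 from rfl, dotQ_cast, dotQ_cast]
        rw [C.pair_w0_ω0 D, C.hω0orth _ (C.R.simple_mem j), C.hω0orth μ hμ]
        ring
      · intro ρ hρ
        rw [dotQ_sub_left, dotQ_smul_left]
        have h1 : dotQ (cz (C.w0 (C.R.coroot (C.R.simple j)))) (cz ρ)
            = dotQ (cz (C.R.coroot (C.R.simple j))) ((D.g0 (C.rt hρ) : C.Rspan) : QS n) := by
          rw [D.hφ, D.hg0c, rt_coe]
        have h2 : dotQ (cz (C.R.coroot (C.R.simple j))) ((D.g0 (C.rt hρ) : C.Rspan) : QS n) * Bjj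
            = 2 * C.B (C.aR j) (D.g0 (C.rt hρ)) :=
          C.refl_formula (C.R.simple_mem j) (D.g0 (C.rt hρ))
        have hBinv : C.B (C.aR j) (D.g0 (C.rt hρ)) = C.B (C.rt hμ) (C.rt hρ) := by
          have hB := C.B_inv D.hh0K D.hg0K D.hhg D.hgh (C.aR j) (D.g0 (C.rt hρ))
          have hh0g0 : D.h0 (D.g0 (C.rt hρ)) = C.rt hρ := by
            have := congrArg (fun f : Module.End ℚ C.Rspan => f (C.rt hρ)) D.hhg
            simpa using this
          have hh0a : D.h0 (C.aR j) = C.rt hμ := by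
            apply Subtype.ext
            rw [D.hh0c, aR_coe, hψμ, rt_coe]
          rw [← hB, hh0g0, hh0a]
        have h3 : dotQ (cz (C.R.coroot μ)) (cz ρ) * Bμ = 2 * C.B (C.rt hμ) (C.rt hρ) :=
          C.refl_formula hμ (C.rt hρ)
        rw [h1]
        have hne := hBjjpos.ne'
        have hne2 := hBμpos.ne'
        have e1 : dotQ (cz (C.R.coroot (C.R.simple j))) ((D.g0 (C.rt hρ) : C.Rspan) : QS n)
            = 2 * C.B (C.rt hμ) (C.rt hρ) / Bjj := by
          rw [← hBinv]
          field_simp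
          linarith [h2]
        have e2 : dotQ (cz (C.R.coroot μ)) (cz ρ) = 2 * C.B (C.rt hμ) (C.rt hρ) / Bμ := by
          field_simp
          linarith [h3]
        rw [e1, e2, hr]
        field_simp
        ring
    have := sub_eq_zero.1 hx0
    exact this
  refine ⟨-μ, r, hnegμ, hrpos, ?_⟩
  have hcor : C.R.coroot μ = -C.R.coroot (-μ) := by
    have := C.R.coroot_neg (-μ) (by
      obtain ⟨hm, -⟩ := C.mem_posRoots_iff.1 hnegμ
      exact hm)
    rw [neg_neg] at this
    exact this
  rw [hkey, hcor, cz_neg]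
  funext k
  simp

/-- `w0⁻¹` sends the coroot of a simple root to a negative multiple of the coroot
of a positive root. -/
lemma w0i_coroot_simple (D : C.W0Data) (j : Fin m) :
    ∃ (p : Lat n) (r : ℚ), p ∈ C.R.posRoots ∧ 0 < r ∧
      cz (C.w0⁻¹ (C.R.coroot (C.R.simple j))) = -(r • cz (C.R.coroot p)) := by
  obtain ⟨δ, hδ, hφδ, hnegδ⟩ := C.adj_pos_neg D (C.simple_mem_posRoots j)
  set Bjj : ℚ := C.B (C.aR j) (C.aR j) with hBjj
  set Bδ : ℚ := C.B (C.rt hδ) (C.rt hδ) with hBδ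
  have hBjjpos : 0 < Bjj := C.B_rt_pos _
  have hBδpos : 0 < Bδ := C.B_rt_pos _
  set r : ℚ := Bδ / Bjj with hr
  have hrpos : 0 < r := by positivity
  have hkey : cz (C.w0⁻¹ (C.R.coroot (C.R.simple j))) = r • cz (C.R.coroot δ) := by
    have hx0 : cz (C.w0⁻¹ (C.R.coroot (C.R.simple j))) - r • cz (C.R.coroot δ) = 0 := by
      apply C.perp_zero
      · rw [dotQ_sub_left, dotQ_smul_left]
        rw [show C.ω0Q = cz C.ω0 from rfl, dotQ_cast, dotQ_cast]
        rw [C.pair_w0i_ω0 D, C.hω0orth _ (C.R.simple_mem j), C.hω0orth δ hδ]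
        ring
      · intro ρ hρ
        rw [dotQ_sub_left, dotQ_smul_left]
        have h1 : dotQ (cz (C.w0⁻¹ (C.R.coroot (C.R.simple j)))) (cz ρ)
            = dotQ (cz (C.R.coroot (C.R.simple j))) ((D.h0 (C.rt hρ) : C.Rspan) : QS n) := by
          rw [D.hψ, D.hh0c, rt_coe]
        have h2 : dotQ (cz (C.R.coroot (C.R.simple j))) ((D.h0 (C.rt hρ) : C.Rspan) : QS n) * Bjj
            = 2 * C.B (C.aR j) (D.h0 (C.rt hρ)) :=
          C.refl_formula (C.R.simple_mem j) (D.h0 (C.rt hρ))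
        have hBinv : C.B (C.aR j) (D.h0 (C.rt hρ)) = C.B (C.rt hδ) (C.rt hρ) := by
          have hB := C.B_inv D.hg0K D.hh0K D.hgh D.hhg (C.aR j) (D.h0 (C.rt hρ))
          have hg0h0 : D.g0 (D.h0 (C.rt hρ)) = C.rt hρ := by
            have := congrArg (fun f : Module.End ℚ C.Rspan => f (C.rt hρ)) D.hgh
            simpa using this
          have hg0a : D.g0 (C.aR j) = C.rt hδ := by
            apply Subtype.ext
            rw [D.hg0c, aR_coe, hφδ, rt_coe]
          rw [← hB, hg0h0, hg0a]
        have h3 : dotQ (cz (C.R.coroot δ)) (cz ρ) * Bδ = 2 * C.B (C.rt hδ) (C.rt hρ) :=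
          C.refl_formula hδ (C.rt hρ)
        rw [h1]
        have hne := hBjjpos.ne'
        have hne2 := hBδpos.ne'
        have e1 : dotQ (cz (C.R.coroot (C.R.simple j))) ((D.h0 (C.rt hρ) : C.Rspan) : QS n)
            = 2 * C.B (C.rt hδ) (C.rt hρ) / Bjj := by
          rw [← hBinv]
          field_simp
          linarith [h2]
        have e2 : dotQ (cz (C.R.coroot δ)) (cz ρ) = 2 * C.B (C.rt hδ) (C.rt hρ) / Bδ := by
          field_simp
          linarith [h3]
        rw [e1, e2, hr]
        field_simp
        ring
    have := sub_eq_zero.1 hx0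
    exact this
  refine ⟨-δ, r, hnegδ, hrpos, ?_⟩
  have hcor : C.R.coroot δ = -C.R.coroot (-δ) := by
    have := C.R.coroot_neg (-δ) (by
      obtain ⟨hm, -⟩ := C.mem_posRoots_iff.1 hnegδ
      exact hm)
    rw [neg_neg] at this
    exact this
  rw [hkey, hcor, cz_neg]
  funext k
  simp

lemma w0_coroot_simple_nonpos (D : C.W0Data) (j i : Fin m) :
    pair (C.w0 (C.R.coroot (C.R.simple j))) (C.ω i) ≤ 0 := by
  obtain ⟨p, r, hp, hr, hkey⟩ := C.w0_coroot_simple D j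
  have hdot : (pair (C.w0 (C.R.coroot (C.R.simple j))) (C.ω i) : ℚ)
      = -(r * (pair (C.R.coroot p) (C.ω i) : ℚ)) := by
    rw [← dotQ_cast, hkey, dotQ_neg_left, dotQ_smul_left, dotQ_cast]
  have hpos := (C.coroot_pos_expand hp).1 i
  have : (0:ℚ) ≤ (pair (C.R.coroot p) (C.ω i) : ℚ) := by exact_mod_cast hpos
  have hfinal : (pair (C.w0 (C.R.coroot (C.R.simple j))) (C.ω i) : ℚ) ≤ 0 := by
    rw [hdot]
    nlinarith
  exact_mod_cast hfinal

lemma w0i_coroot_simple_nonpos (D : C.W0Data) (j i : Fin m) :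
    pair (C.w0⁻¹ (C.R.coroot (C.R.simple j))) (C.ω i) ≤ 0 := by
  obtain ⟨p, r, hp, hr, hkey⟩ := C.w0i_coroot_simple D j
  have hdot : (pair (C.w0⁻¹ (C.R.coroot (C.R.simple j))) (C.ω i) : ℚ)
      = -(r * (pair (C.R.coroot p) (C.ω i) : ℚ)) := by
    rw [← dotQ_cast, hkey, dotQ_neg_left, dotQ_smul_left, dotQ_cast]
  have hpos := (C.coroot_pos_expand hp).1 i
  have : (0:ℚ) ≤ (pair (C.R.coroot p) (C.ω i) : ℚ) := by exact_mod_cast hpos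
  have hfinal : (pair (C.w0⁻¹ (C.R.coroot (C.R.simple j))) (C.ω i) : ℚ) ≤ 0 := by
    rw [hdot]
    nlinarith
  exact_mod_cast hfinal

lemma w0_coroot_pos_nonpos (D : C.W0Data) {β : Lat n} (hβ : β ∈ C.R.posRoots) (i : Fin m) :
    pair (C.w0 (C.R.coroot β)) (C.ω i) ≤ 0 := by
  obtain ⟨hsign, hexp⟩ := C.coroot_pos_expand hβ
  set t : Fin m → ℤ := fun j => pair (C.R.coroot β) (C.ω j) with ht
  set M0 : Lat n →+ Lat n := AddMonoidHom.mk' C.w0 D.hadd with hM0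
  have hM0a : ∀ v, M0 v = C.w0 v := fun v => rfl
  have hw0sum : C.w0 (C.R.coroot β) = ∑ j, t j • C.w0 (C.R.coroot (C.R.simple j)) := by
    rw [← hM0a, hexp, map_sum]
    apply Finset.sum_congr rfl
    intro j _
    rw [AddMonoidHom.map_zsmul, hM0a]
  rw [hw0sum, pair_sum_left]
  apply Finset.sum_nonpos
  intro j _
  rw [pair_zsmul_left]
  exact mul_nonpos_of_nonneg_of_nonpos (hsign j) (C.w0_coroot_simple_nonpos D j i)

end ACtx

end AutSheaf
namespace AutSheaf

open Foundations

namespace ACtx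

variable {n m : ℕ} (C : ACtx n m)

lemma posRoots_subset : C.R.posRoots ⊆ C.R.roots := fun α hα => (C.mem_posRoots_iff.1 hα).1

lemma poscomb_mem_corootSpan {x : Lat n} (c : Lat n → ℕ)
    (hx : x = ∑ α ∈ C.R.posRoots, (c α : ℤ) • C.R.coroot α) : x ∈ C.R.corootSpan := by
  rw [hx]
  apply Submodule.sum_mem
  intro α hα
  exact Submodule.smul_mem _ _
    (Submodule.subset_span ⟨α, C.posRoots_subset hα, rfl⟩)

lemma γ_dominant : C.R.IsDominant C.γ := C.hγ.2.2.1.1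

lemma γ_mem_LamGS : C.γ ∈ C.R.LamGS C.γ := by
  refine ⟨C.γ_dominant, 1, ?_⟩
  refine ⟨fun _ => 0, ?_⟩
  have : (1 : ℕ) • C.γ - C.γ = 0 := by rw [one_smul]; abel
  rw [this]
  symm
  apply Finset.sum_eq_zero
  intro α _
  simp

lemma LamGS_pair_ω0 {v : Lat n} {k : ℕ} (hc : C.R.cole v (k • C.γ)) :
    pair v C.ω0 = k := by
  obtain ⟨c, hsum⟩ := hc
  have hmem : k • C.γ - v ∈ C.R.corootSpan := C.poscomb_mem_corootSpan c hsum
  have h0 := C.pair_corootSpan_ω0 hmem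
  rw [pair_sub_left, pair_nsmul_left, C.hω0norm] at h0
  omega

/-- For `v ∈ Λ⁺_{G,S}`, `⟨w₀ v, ω̌ᵢ⟩ ≥ 0`. -/
lemma LamGS_w0_ω_nonneg (D : C.W0Data) {v : Lat n} (hv : v ∈ C.R.LamGS C.γ) (i : Fin m) :
    0 ≤ pair (C.w0 v) (C.ω i) := by
  obtain ⟨hdom, k, c, hsum⟩ := hv
  set S : Lat n := ∑ α ∈ C.R.posRoots, (c α : ℤ) • C.R.coroot α with hS
  have hv2 : v = k • C.γ - S := by rw [← hsum]; abel
  set M0 : Lat n →+ Lat n := AddMonoidHom.mk' C.w0 D.hadd with hM0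
  have hM0a : ∀ x, M0 x = C.w0 x := fun _ => rfl
  have hw0v : C.w0 v = k • C.w0 C.γ - M0 S := by
    rw [← hM0a, hv2, map_sub, AddMonoidHom.map_nsmul, hM0a]
  have hw0S : M0 S = ∑ α ∈ C.R.posRoots, (c α : ℤ) • C.w0 (C.R.coroot α) := by
    rw [hS, map_sum]
    apply Finset.sum_congr rfl
    intro α _
    rw [AddMonoidHom.map_zsmul, hM0a]
  have hpairS : pair (M0 S) (C.ω i) ≤ 0 := by
    rw [hw0S, pair_sum_left]
    apply Finset.sum_nonpos
    intro α hα
    rw [pair_zsmul_left]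
    exact mul_nonpos_of_nonneg_of_nonpos (Int.natCast_nonneg _)
      (C.w0_coroot_pos_nonpos D hα i)
  rw [hw0v, pair_sub_left, pair_nsmul_left, C.hωw0 i]
  omega

lemma LamGS_w0_ω0 (D : C.W0Data) {v : Lat n} (hv : v ∈ C.R.LamGS C.γ) :
    0 ≤ pair (C.w0 v) C.ω0 := by
  obtain ⟨hdom, k, hc⟩ := hv
  rw [C.pair_w0_ω0 D, C.LamGS_pair_ω0 hc]
  positivity

/-- Direction ⊇ of statement (1): nonnegative combinations lie in `Λ̌⁺_S`. -/
lemma span_subset_LamCheckS (D : C.W0Data) (a : ℕ) (c : Fin m → ℕ) :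
    ((a : ℤ) • C.ω0 + ∑ i, (c i : ℤ) • C.ω i) ∈ C.R.LamCheckS C.γ C.w0 := by
  set lc : Lat n := (a : ℤ) • C.ω0 + ∑ i, (c i : ℤ) • C.ω i with hlc
  have hpair : ∀ x : Lat n, pair x lc
      = (a : ℤ) * pair x C.ω0 + ∑ i, (c i : ℤ) * pair x (C.ω i) := by
    intro x
    rw [hlc, pair_add_right, pair_zsmul_right, pair_sum_right]
    rw [Finset.sum_congr rfl (fun i _ => pair_zsmul_right ((c i : ℤ)) x (C.ω i))]
  constructor
  · intro j
    rw [hpair, C.hω0orth _ (C.R.simple_mem j), mul_zero, zero_add]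
    apply Finset.sum_nonneg
    intro i _
    have := C.hω i j
    rw [this]
    split <;> positivity
  · intro v hv
    rw [hpair]
    have h1 := C.LamGS_w0_ω0 D hv
    have h2 := fun i => C.LamGS_w0_ω_nonneg D hv i
    have hs : 0 ≤ ∑ i, (c i : ℤ) * pair (C.w0 v) (C.ω i) :=
      Finset.sum_nonneg fun i _ => mul_nonneg (Int.natCast_nonneg _) (h2 i)
    positivity

lemma ω0_mem_LamCheckS (D : C.W0Data) : C.ω0 ∈ C.R.LamCheckS C.γ C.w0 := by
  have := C.span_subset_LamCheckS D 1 (fun _ => 0)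
  simpa using this

lemma ω_mem_LamCheckS (D : C.W0Data) (i : Fin m) : C.ω i ∈ C.R.LamCheckS C.γ C.w0 := by
  classical
  have := C.span_subset_LamCheckS D 0 (fun j => if j = i then 1 else 0)
  have heq : ((0 : ℕ) : ℤ) • C.ω0 + ∑ j, ((if j = i then (1:ℕ) else 0 : ℕ) : ℤ) • C.ω j
      = C.ω i := by
    have hterm : ∀ j : Fin m, ((if j = i then (1:ℕ) else 0 : ℕ) : ℤ) • C.ω j
        = if j = i then (1:ℤ) • C.ω j else 0 := by
      intro j
      split <;> simp
    rw [Finset.sum_congr rfl (fun j _ => hterm j)]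
    rw [Finset.sum_ite_eq' Finset.univ i (fun j => (1:ℤ) • C.ω j)]
    simp
  rwa [heq] at this

/-- Direction ⊆ of statement (1). -/
lemma LamCheckS_subset_span (D : C.W0Data) {lc : Lat n}
    (hlc : lc ∈ C.R.LamCheckS C.γ C.w0) :
    ∃ (a : ℕ) (c : Fin m → ℕ), lc = (a : ℤ) • C.ω0 + ∑ i, (c i : ℤ) • C.ω i := by
  obtain ⟨hdw, hpos⟩ := hlc
  set b : Fin m → ℤ := fun i => pair (C.R.coroot (C.R.simple i)) lc with hb
  have hbnn : ∀ i, 0 ≤ b i := fun i => hdw i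
  set a : ℤ := pair C.γ lc - ∑ i, b i * pair C.γ (C.ω i) with ha
  have hdecomp : lc = a • C.ω0 + ∑ i, b i • C.ω i := by
    apply cz_inj
    have hwd := C.w_decomp (cz lc)
    have hbQ : ∀ i, dotQ (C.cβ i) (cz lc) = (b i : ℚ) := by
      intro i
      rw [cβ, dotQ_cast, hb]
    have haQ : dotQ C.γQ (cz lc) - ∑ i, dotQ (C.cβ i) (cz lc) * dotQ C.γQ (C.ωQ i)
        = (a : ℚ) := by
      rw [γQ, dotQ_cast, ha]
      push_cast
      congr 1
      apply Finset.sum_congr rfl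
      intro i _
      rw [hbQ i, ωQ, dotQ_cast]
    rw [cz_add, cz_zsmul, cz_sum]
    rw [Finset.sum_congr rfl (fun i _ => cz_zsmul (b i) (C.ω i))]
    rw [hwd, haQ]
    congr 1
    apply Finset.sum_congr rfl
    intro i _
    rw [hbQ i]
    rfl
  have hpairγ : pair (C.w0 C.γ) lc = a := by
    nth_rewrite 1 [hdecomp]
    rw [pair_add_right, pair_zsmul_right, pair_sum_right]
    rw [C.pair_w0_ω0 D, C.hω0norm]
    rw [Finset.sum_congr rfl (fun i _ => by rw [pair_zsmul_right, C.hωw0 i, mul_zero])]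
    simp
  have hann : 0 ≤ a := by
    rw [← hpairγ]
    exact hpos C.γ C.γ_mem_LamGS
  refine ⟨a.toNat, fun i => (b i).toNat, ?_⟩
  rw [hdecomp]
  rw [Int.toNat_of_nonneg hann]
  congr 1
  apply Finset.sum_congr rfl
  intro i _
  rw [Int.toNat_of_nonneg (hbnn i)]

/-- Statement (1). -/
lemma LamCheckS_eq (D : C.W0Data) :
    C.R.LamCheckS C.γ C.w0 =
      {lc | ∃ (a : ℕ) (c : Fin m → ℕ), lc = (a : ℤ) • C.ω0 + ∑ i, (c i : ℤ) • C.ω i} := by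
  ext lc
  constructor
  · intro h
    exact C.LamCheckS_subset_span D h
  · rintro ⟨a, c, rfl⟩
    exact C.span_subset_LamCheckS D a c

end ACtx

end AutSheaf
namespace AutSheaf

open Foundations

namespace ACtx

variable {n m : ℕ} (C : ACtx n m)

lemma γ_expand (D : C.W0Data) :
    C.γ = C.w0 C.γ + ∑ i, pair C.γ (C.ω i) • C.R.coroot (C.R.simple i) := by
  have h := (C.corootSpan_mem (D.hmem C.γ)).2
  have hco : ∀ i, pair (C.w0 C.γ - C.γ) (C.ω i) = -pair C.γ (C.ω i) := by
    intro i
    rw [pair_sub_left, C.hωw0 i]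
    ring
  have hS : C.w0 C.γ - C.γ = -(∑ i, pair C.γ (C.ω i) • C.R.coroot (C.R.simple i)) :=
    calc C.w0 C.γ - C.γ
        = ∑ i, pair (C.w0 C.γ - C.γ) (C.ω i) • C.R.coroot (C.R.simple i) := h
      _ = ∑ i, -(pair C.γ (C.ω i) • C.R.coroot (C.R.simple i)) := by
          apply Finset.sum_congr rfl
          intro i _
          rw [hco i, neg_smul]
      _ = -(∑ i, pair C.γ (C.ω i) • C.R.coroot (C.R.simple i)) := by
          rw [Finset.sum_neg_distrib]
  rw [sub_eq_iff_eq_add.1 hS]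
  abel

lemma w0i_γ_expand (D : C.W0Data) :
    C.w0⁻¹ C.γ = C.γ + ∑ i, pair C.γ (C.ω i) • C.w0⁻¹ (C.R.coroot (C.R.simple i)) := by
  set M0i : Lat n →+ Lat n := AddMonoidHom.mk' (fun x => C.w0⁻¹ x) D.haddi with hM0i
  have hM0ia : ∀ x, M0i x = C.w0⁻¹ x := fun _ => rfl
  have h := congrArg (fun x => M0i x) (C.γ_expand D)
  rw [map_add, map_sum] at h
  rw [show M0i (C.w0 C.γ) = C.w0⁻¹ (C.w0 C.γ) from rfl, Equiv.Perm.inv_apply_self] at h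
  rw [hM0ia] at h
  rw [h]
  congr 1
  apply Finset.sum_congr rfl
  intro i _
  rw [AddMonoidHom.map_zsmul, hM0ia]

/-- The key inequality for statement (2), direction ⊇. -/
lemma pair_v_ω_le (D : C.W0Data) {v : Lat n} {k : ℤ}
    (hkv : pair v C.ω0 = k)
    (hui : ∀ i, 0 ≤ pair (C.w0 v) (C.ω i)) (j : Fin m) :
    pair v (C.ω j) ≤ k * pair C.γ (C.ω j) := by
  classical
  set l : QS n := D.ψ0 (C.ωQ j) with hl
  set E : Fin m → ℤ := fun i => pair (C.w0⁻¹ (C.R.coroot (C.R.simple i))) (C.ω j) with hE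
  have hEnp : ∀ i, E i ≤ 0 := fun i => C.w0i_coroot_simple_nonpos D i j
  have hEl : ∀ i, dotQ (C.cβ i) l = (E i : ℚ) := by
    intro i
    rw [hl, cβ, ← D.hψ, hE]
    rw [show C.ωQ j = cz (C.ω j) from rfl, dotQ_cast]
  have hγl : dotQ C.γQ l = (pair (C.w0⁻¹ C.γ) (C.ω j) : ℚ) := by
    rw [hl, γQ, ← D.hψ]
    rw [show C.ωQ j = cz (C.ω j) from rfl, dotQ_cast]
  have hw0iγ : pair (C.w0⁻¹ C.γ) (C.ω j) = pair C.γ (C.ω j) + ∑ i, pair C.γ (C.ω i) * E i := by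
    rw [C.w0i_γ_expand D, pair_add_left, pair_sum_left]
    congr 1
    apply Finset.sum_congr rfl
    intro i _
    rw [pair_zsmul_left, hE]
  have hterm : ∀ i, dotQ (C.cβ i) l * dotQ C.γQ (C.ωQ i)
      = (pair C.γ (C.ω i) : ℚ) * (E i : ℚ) := by
    intro i
    rw [hEl i, show C.γQ = cz C.γ from rfl, show C.ωQ i = cz (C.ω i) from rfl, dotQ_cast]
    ring
  have hA : dotQ C.γQ l - ∑ i, dotQ (C.cβ i) l * dotQ C.γQ (C.ωQ i)
      = (pair C.γ (C.ω j) : ℚ) := by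
    rw [hγl, hw0iγ, Finset.sum_congr rfl (fun i _ => hterm i)]
    push_cast
    ring
  have hvj : (pair v (C.ω j) : ℚ) = dotQ (cz (C.w0 v)) l := by
    have hinv : C.w0⁻¹ (C.w0 v) = v := Equiv.Perm.inv_apply_self _ _
    calc (pair v (C.ω j) : ℚ) = dotQ (cz v) (cz (C.ω j)) := (dotQ_cast _ _).symm
      _ = dotQ (cz (C.w0⁻¹ (C.w0 v))) (C.ωQ j) := by rw [hinv, ωQ]
      _ = dotQ (cz (C.w0 v)) (D.ψ0 (C.ωQ j)) := D.hψ (C.w0 v) (C.ωQ j)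
      _ = dotQ (cz (C.w0 v)) l := by rw [← hl]
  have hwd := C.w_decomp l
  have hku : pair (C.w0 v) C.ω0 = k := by
    rw [C.pair_w0_ω0 D, hkv]
  have hexp : dotQ (cz (C.w0 v)) l = (pair C.γ (C.ω j) : ℚ) * (k:ℚ)
      + ∑ i, (E i : ℚ) * (pair (C.w0 v) (C.ω i) : ℚ) := by
    nth_rewrite 1 [hwd]
    rw [dotQ_add_right, dotQ_smul_right, dotQ_sum_right, hA]
    rw [show C.ω0Q = cz C.ω0 from rfl, dotQ_cast, hku]
    congr 1
    apply Finset.sum_congr rfl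
    intro i _
    rw [dotQ_smul_right, hEl i, show C.ωQ i = cz (C.ω i) from rfl, dotQ_cast]
  have hle : dotQ (cz (C.w0 v)) l ≤ (pair C.γ (C.ω j) : ℚ) * (k:ℚ) := by
    rw [hexp]
    have hsn : ∑ i, (E i : ℚ) * (pair (C.w0 v) (C.ω i) : ℚ) ≤ 0 := by
      apply Finset.sum_nonpos
      intro i _
      apply mul_nonpos_of_nonpos_of_nonneg
      · exact_mod_cast hEnp i
      · exact_mod_cast hui i
    linarith
  have hfin : (pair v (C.ω j) : ℚ) ≤ (k : ℚ) * (pair C.γ (C.ω j) : ℚ) := by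
    rw [hvj]
    linarith [hle]
  exact_mod_cast hfin

/-- Statement (2), direction ⊇. -/
lemma mem_LamGS_of_dual (D : C.W0Data) {v : Lat n} (hdom : C.R.IsDominant v)
    (hv : ∀ lc ∈ C.R.LamCheckS C.γ C.w0, 0 ≤ pair (C.w0 v) lc) :
    v ∈ C.R.LamGS C.γ := by
  classical
  have hu0 : 0 ≤ pair (C.w0 v) C.ω0 := hv _ (C.ω0_mem_LamCheckS D)
  have hui : ∀ i, 0 ≤ pair (C.w0 v) (C.ω i) := fun i => hv _ (C.ω_mem_LamCheckS D i)
  obtain ⟨k, hk⟩ := C.hγ.2.2.2.1 (C.R.toPi1 v)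
  have hmemD : v - k • C.γ ∈ C.R.corootSpan := by
    have heq : C.R.toPi1 v = C.R.toPi1 (k • C.γ) := by
      rw [hk]
      unfold RootDatum.toPi1
      rw [Submodule.Quotient.mk_smul]
    exact (Submodule.Quotient.eq _).1 heq
  have hkv : pair v C.ω0 = k := by
    have h0 := C.pair_corootSpan_ω0 hmemD
    rw [pair_sub_left, pair_zsmul_left, C.hω0norm] at h0
    omega
  have hknn : 0 ≤ k := by
    have hh := hu0
    rw [C.pair_w0_ω0 D, hkv] at hh
    exact hh
  set Dv : Lat n := k • C.γ - v with hDv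
  have hDmem : Dv ∈ C.R.corootSpan := by
    have hneg := C.R.corootSpan.neg_mem hmemD
    have he : -(v - k • C.γ) = Dv := by rw [hDv]; abel
    rwa [he] at hneg
  set t : Fin m → ℤ := fun j => pair Dv (C.ω j) with ht
  have htnn : ∀ j, 0 ≤ t j := by
    intro j
    have hle := C.pair_v_ω_le D hkv hui j
    rw [ht]
    simp only
    rw [hDv, pair_sub_left, pair_zsmul_left]
    omega
  have hexp : Dv = ∑ j, t j • C.R.coroot (C.R.simple j) := (C.corootSpan_mem hDmem).2
  set cf : Lat n → ℕ := fun α => ∑ j, if C.R.simple j = α then (t j).toNat else 0 with hcf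
  have hsum : ∑ α ∈ C.R.posRoots, (cf α : ℤ) • C.R.coroot α = Dv := by
    have h1 : ∀ α, ((cf α : ℕ) : ℤ) • C.R.coroot α
        = ∑ j, (if C.R.simple j = α then ((t j).toNat : ℤ) • C.R.coroot α else 0) := by
      intro α
      rw [hcf]
      push_cast
      rw [Finset.sum_smul]
      apply Finset.sum_congr rfl
      intro j _
      rw [ite_smul, zero_smul]
    rw [Finset.sum_congr rfl (fun α _ => h1 α), Finset.sum_comm]
    rw [Finset.sum_congr rfl (fun j _ => Finset.sum_ite_eq C.R.posRoots (C.R.simple j)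
      (fun α => ((t j).toNat : ℤ) • C.R.coroot α))]
    rw [Finset.sum_congr rfl (fun j _ => if_pos (C.simple_mem_posRoots j))]
    rw [hexp]
    apply Finset.sum_congr rfl
    intro j _
    rw [Int.toNat_of_nonneg (htnn j)]
  refine ⟨hdom, k.toNat, ?_⟩
  refine ⟨cf, ?_⟩
  have hnat : (k.toNat : ℕ) • C.γ = k • C.γ := by
    rw [← natCast_zsmul, Int.toNat_of_nonneg hknn]
  rw [hnat, ← hDv, hsum]

/-- Statement (2). -/
lemma LamGS_eq (D : C.W0Data) :
    C.R.LamGS C.γ =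
      {v | C.R.IsDominant v ∧ ∀ lc ∈ C.R.LamCheckS C.γ C.w0, 0 ≤ pair (C.w0 v) lc} := by
  ext v
  constructor
  · intro hvmem
    refine ⟨hvmem.1, fun lc hlc => ?_⟩
    exact hlc.2 v hvmem
  · rintro ⟨hdom, hdual⟩
    exact C.mem_LamGS_of_dual D hdom hdual

end ACtx

end AutSheaf
namespace AutSheaf

/-- For a 1-admissible datum `γ`, the semigroup
`Λ̌⁺_S = { λ̌ ∈ Λ̌⁺ : ⟨w₀(λ), λ̌⟩ ≥ 0 for all λ ∈ Λ⁺_{G,S} }` is the `ℤ₊`-span of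
`ω̌₀` and the normalized fundamental weights `ω̌ᵢ`; moreover
`Λ⁺_{G,S} = { λ ∈ Λ⁺ : ⟨w₀(λ), λ̌⟩ ≥ 0 for all λ̌ ∈ Λ̌⁺_S }`. -/
theorem lamCheckS_span_and_lamGS_characterization
    {n m : ℕ} (R : RootDatum n m) (γ : Lat n)
    (hγ : R.IsOneAdmissible γ)
    -- the longest element w₀ of the Weyl group (acting on coweights)
    (w0 : Equiv.Perm (Lat n)) (hw0 : w0 ∈ R.weyl)
    (hw0d : ∀ v : Lat n, R.IsDominant v → R.IsDominant (-(w0 v)))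
    -- ω̌₀: the generator of the group of weights orthogonal to all coroots,
    -- normalized by ⟨θ, ω̌₀⟩ = 1 (θ being the image of γ)
    (ω0 : Lat n)
    (hω0orth : ∀ α ∈ R.roots, pair (R.coroot α) ω0 = 0)
    (hω0gen : ∀ lc : Lat n, (∀ α ∈ R.roots, pair (R.coroot α) lc = 0) → ∃ k : ℤ, lc = k • ω0)
    (hω0norm : pair γ ω0 = 1)
    -- ω̌ᵢ: the fundamental weight corresponding to αᵢ with ⟨w₀(γ), ω̌ᵢ⟩ = 0
    (ω : Fin m → Lat n)
    (hω : ∀ i j, pair (R.coroot (R.simple j)) (ω i) = if i = j then 1 else 0)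
    (hωw0 : ∀ i, pair (w0 γ) (ω i) = 0) :
    R.LamCheckS γ w0 =
      {lc | ∃ (a : ℕ) (c : Fin m → ℕ), lc = (a : ℤ) • ω0 + ∑ i, (c i : ℤ) • ω i} ∧
    R.LamGS γ =
      {v | R.IsDominant v ∧ ∀ lc ∈ R.LamCheckS γ w0, 0 ≤ pair (w0 v) lc} := by
  set C : ACtx n m := ⟨R, γ, hγ, w0, hw0, hw0d, ω0, hω0orth, hω0norm, ω, hω, hωw0⟩ with hC
  obtain ⟨D⟩ := C.exists_w0data
  exact ⟨C.LamCheckS_eq D, C.LamGS_eq D⟩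

end AutSheaf
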